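/- arXiv:1705.08676 — 5 statements merged into one kernel-verified Lean document; each statement's English description precedes it below -/
import Mathlib

section
/- Let σ < π be permutations in the classical permutation pattern order, with σ of length m and π of length n, and suppose n − m ≥ 3. Then the open interval (σ,π) = {λ : σ < λ < π} is disconnected if and only if [σ,π] is strongly zero split. -/
attribute [local instance] Classical.propDecidable

noncomputable instance {α : Type*} [Fintype α] : Fintype (WithBot α) :=
  inferInstanceAs (Fintype (Option α))
noncomputable instance {α : Type*} [Fintype α] : Fintype (WithTop α) :=
  inferInstanceAs (Fintype (Option α))

/-- The Möbius function of a finite partial order. -/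
noncomputable def mob {α : Type*} [Preorder α] [Fintype α] (a b : α) : ℤ :=
  letI := Classical.decEq α
  letI : @DecidableRel α α (· ≤ ·) := Classical.decRel _
  letI : @DecidableRel α α (· < ·) := Classical.decRel _
  letI : LocallyFiniteOrder α := Fintype.toLocallyFiniteOrder
  IncidenceAlgebra.mu ℤ a b

/-- The bounded poset obtained by adjoining a new minimum `0̂` and maximum `1̂`. -/
abbrev Bd (α : Type*) := WithBot (WithTop α)

/-- The Möbius number `μ(0̂,1̂)` of a finite poset with a new minimum and maximum adjoined. -/
noncomputable def mobHat (α : Type*) [Preorder α] [Fintype α] : ℤ :=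
  mob (⊥ : Bd α) ⊤

/-- Classical pattern containment for (reduced) permutations. -/
def PermLE {m n : ℕ} (σ : Equiv.Perm (Fin m)) (π : Equiv.Perm (Fin n)) : Prop :=
  ∃ f : Fin m → Fin n, StrictMono f ∧ ∀ i j : Fin m, σ i < σ j ↔ π (f i) < π (f j)

/-- Strict classical pattern containment. -/
def PermLT {m n : ℕ} (σ : Equiv.Perm (Fin m)) (π : Equiv.Perm (Fin n)) : Prop :=
  PermLE σ π ∧ ¬ PermLE π σ

/-- `red π S` is the permutation of length `S.card` order-isomorphic to `π`
restricted to the set of positions `S`. -/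
noncomputable def red {n : ℕ} (π : Equiv.Perm (Fin n)) (S : Finset (Fin n)) :
    Equiv.Perm (Fin S.card) := by
  classical
  have hcard : (S.image fun x => π x).card = S.card :=
    Finset.card_image_of_injective _ π.injective
  refine Equiv.ofBijective (fun i =>
    ((S.image fun x => π x).orderIsoOfFin hcard).symm
      ⟨π (S.orderIsoOfFin rfl i), Finset.mem_image_of_mem _ (S.orderIsoOfFin rfl i).2⟩)
    (Finite.injective_iff_bijective.mp ?_)
  intro i j hij
  have h2 := congrArg (fun z => ((((S.image fun x => π x).orderIsoOfFin hcard) z : Fin n)))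
    hij
  simp only [OrderIso.apply_symm_apply] at h2
  have h4 := π.injective h2
  have h5 : (S.orderIsoOfFin rfl) i = (S.orderIsoOfFin rfl) j := Subtype.ext h4
  exact (S.orderIsoOfFin rfl).injective h5

/-- `S` is an embedding (occurrence set) of `σ` in `π`, i.e. `red(π|_S) = σ`. -/
def IsEmb {n m : ℕ} (π : Equiv.Perm (Fin n)) (S : Finset (Fin n))
    (σ : Equiv.Perm (Fin m)) : Prop :=
  ∃ h : S.card = m, ∀ i : Fin S.card, (red π S i : ℕ) = (σ (Fin.cast h i) : ℕ)

/-- `E(σ,π)`: the number of embeddings of `σ` in `π`. -/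
noncomputable def permE {m n : ℕ} (σ : Equiv.Perm (Fin m)) (π : Equiv.Perm (Fin n)) : ℕ :=
  (Finset.univ.filter fun S : Finset (Fin n) => IsEmb π S σ).card

/-- The poset `A*(λ,π)` of proper position sets `S ⊊ Fin n` with `λ ≤ red(π|_S)`,
ordered by inclusion. -/
abbrev AstarP {n k : ℕ} (π : Equiv.Perm (Fin n)) (lam : Equiv.Perm (Fin k)) :=
  {S : Finset (Fin n) // S ≠ Finset.univ ∧ PermLE lam (red π S)}

/-- The predecessor position. -/
def predPos {n : ℕ} (p : Fin n) : Fin n :=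
  ⟨p.1 - 1, lt_of_le_of_lt (Nat.sub_le p.1 1) p.2⟩

/-- `p` lies in the tail of an adjacency of `π`: `p` is not the first position and the
values of `π` at `p−1` and `p` differ by exactly one (consecutive positions in a maximal
block on which the values increase by exactly 1 at each step or decrease by exactly 1 at
each step). -/
def tailPos {n : ℕ} (π : Equiv.Perm (Fin n)) (p : Fin n) : Prop :=
  0 < p.1 ∧ ((π p : ℕ) = (π (predPos p) : ℕ) + 1 ∨ (π (predPos p) : ℕ) = (π p : ℕ) + 1)

/-- A normal embedding: an embedding containing every position in the tail of an
adjacency of `π`. -/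
def IsNormalEmb {n m : ℕ} (π : Equiv.Perm (Fin n)) (S : Finset (Fin n))
    (σ : Equiv.Perm (Fin m)) : Prop :=
  IsEmb π S σ ∧ ∀ p : Fin n, tailPos π p → p ∈ S

/-- `NE(σ,π)`: the number of normal embeddings of `σ` in `π`. -/
noncomputable def permNE {m n : ℕ} (σ : Equiv.Perm (Fin m)) (π : Equiv.Perm (Fin n)) : ℕ :=
  (Finset.univ.filter fun S : Finset (Fin n) => IsNormalEmb π S σ).card

/-- A set of positions is representative if within every adjacency of `π` its positions
form a suffix of the adjacency. -/
def ReprP {n : ℕ} (π : Equiv.Perm (Fin n)) (S : Finset (Fin n)) : Prop :=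
  ∀ p : Fin n, tailPos π p → predPos p ∈ S → p ∈ S

/-- The poset `R*(λ,π)` of representative proper position sets `S ⊊ Fin n` with
`λ ≤ red(π|_S)`, ordered by inclusion. -/
abbrev RstarP {n k : ℕ} (π : Equiv.Perm (Fin n)) (lam : Equiv.Perm (Fin k)) :=
  {S : Finset (Fin n) // S ≠ Finset.univ ∧ ReprP π S ∧ PermLE lam (red π S)}

/-- The type of all (reduced) permutations of arbitrary lengths. -/
def AllPerm : Type := Σ k : ℕ, Equiv.Perm (Fin k)

/-- Pattern containment on `AllPerm`. -/
def APle (a b : AllPerm) : Prop := PermLE a.2 b.2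

/-- Strict pattern containment on `AllPerm`. -/
def APlt (a b : AllPerm) : Prop := APle a b ∧ ¬ APle b a

/-- A subset `s` of a set with a binary "less or equal" relation `r` is disconnected if it
splits into two nonempty parts such that every pair of elements from separate parts is
incomparable. -/
def DisconnRel {α : Type*} (r : α → α → Prop) (s : Set α) : Prop :=
  ∃ A B : Set α, A.Nonempty ∧ B.Nonempty ∧ A ∪ B = s ∧ A ∩ B = ∅ ∧
    ∀ a ∈ A, ∀ b ∈ B, ¬ r a b ∧ ¬ r b a

/-- The set of embeddings of `σ` in `π`. -/
def EmbSet {m n : ℕ} (σ : Equiv.Perm (Fin m)) (π : Equiv.Perm (Fin n)) :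
    Set (Finset (Fin n)) := {S | IsEmb π S σ}

/-- The union of the zero sets (complements) of a collection of embeddings. -/
def ZSet {n : ℕ} (E : Set (Finset (Fin n))) : Set (Fin n) :=
  ⋃ S ∈ E, (↑(Sᶜ) : Set (Fin n))

/-- `E₁, E₂` is a zero split partition of the embeddings of `σ` in `π`. -/
def ZeroSplitPartition {m n : ℕ} (σ : Equiv.Perm (Fin m)) (π : Equiv.Perm (Fin n))
    (E₁ E₂ : Set (Finset (Fin n))) : Prop :=
  E₁.Nonempty ∧ E₂.Nonempty ∧ E₁ ∪ E₂ = EmbSet σ π ∧ E₁ ∩ E₂ = ∅ ∧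
    ZSet E₁ ∩ ZSet E₂ = ∅

/-- The interval `[σ,π]` is zero split. -/
def ZeroSplit {m n : ℕ} (σ : Equiv.Perm (Fin m)) (π : Equiv.Perm (Fin n)) : Prop :=
  ∃ E₁ E₂ : Set (Finset (Fin n)), ZeroSplitPartition σ π E₁ E₂

/-- The strong condition on a zero split partition: no pair of zero positions can be
filled so that the two resulting position sets are embeddings of the same element. -/
def StrongCondition {n : ℕ} (π : Equiv.Perm (Fin n)) (E₁ E₂ : Set (Finset (Fin n))) : Prop :=
  ∀ S₁ ∈ E₁, ∀ S₂ ∈ E₂,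
    ¬ ∃ z₁ ∈ (↑(S₁ᶜ) : Set (Fin n)), ∃ z₂ ∈ (↑(S₂ᶜ) : Set (Fin n)),
      ∃ (k : ℕ) (τ : Equiv.Perm (Fin k)),
        IsEmb π (insert z₁ S₁) τ ∧ IsEmb π (insert z₂ S₂) τ

/-- The interval `[σ,π]` is strongly zero split. -/
def StronglyZeroSplit {m n : ℕ} (σ : Equiv.Perm (Fin m)) (π : Equiv.Perm (Fin n)) : Prop :=
  ∃ E₁ E₂ : Set (Finset (Fin n)),
    ZeroSplitPartition σ π E₁ E₂ ∧ StrongCondition π E₁ E₂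

set_option linter.deprecated false
namespace SzsAux
open Finset Equiv
variable {n m k : ℕ}


/-- enumeration of a finset of `Fin n` in increasing order -/
noncomputable def emap (S : Finset (Fin n)) : Fin S.card → Fin n :=
  fun i => ((S.orderIsoOfFin rfl i : Fin n))

lemma emap_mem (S : Finset (Fin n)) (i : Fin S.card) : emap S i ∈ S :=
  (S.orderIsoOfFin rfl i).2

lemma emap_strictMono (S : Finset (Fin n)) : StrictMono (emap S) := by
  intro i j hij
  exact Subtype.coe_lt_coe.2 ((S.orderIsoOfFin rfl).lt_iff_lt.2 hij)

lemma emap_eq_orderEmbOfFin (S : Finset (Fin n)) (i : Fin S.card) :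
    emap S i = S.orderEmbOfFin rfl i :=
  Finset.coe_orderIsoOfFin_apply S rfl i

lemma red_lt_iff (π : Equiv.Perm (Fin n)) (S : Finset (Fin n)) (i j : Fin S.card) :
    red π S i < red π S j ↔ π (emap S i) < π (emap S j) := by
  have hcard : (S.image fun x => π x).card = S.card :=
    Finset.card_image_of_injective _ π.injective
  show ((S.image fun x => π x).orderIsoOfFin hcard).symm
      ⟨π (emap S i), Finset.mem_image_of_mem _ (S.orderIsoOfFin rfl i).2⟩ <
    ((S.image fun x => π x).orderIsoOfFin hcard).symm
      ⟨π (emap S j), Finset.mem_image_of_mem _ (S.orderIsoOfFin rfl j).2⟩ ↔ _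
  rw [OrderIso.lt_iff_lt]
  exact Subtype.mk_lt_mk



lemma perm_eq_of_orderIso {r : ℕ} (p q : Equiv.Perm (Fin r))
    (h : ∀ i j, p i < p j ↔ q i < q j) : p = q := by
  have key : ∀ (p : Equiv.Perm (Fin r)) (i : Fin r),
      (p i : ℕ) = (univ.filter fun j => p j < p i).card := by
    intro p i
    have hcard : (univ.filter fun j => p j < p i).card = (Finset.Iio (p i)).card := by
      refine Finset.card_bij (fun a _ => p a) ?_ ?_ ?_
      · intro a ha; simpa using (Finset.mem_filter.1 ha).2
      · intro a _ b _ hab; exact p.injective hab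
      · intro b hb
        refine ⟨p.symm b, ?_, by simp⟩
        simp only [Finset.mem_filter, Finset.mem_univ, true_and, Equiv.apply_symm_apply]
        simpa using hb
    rw [hcard, Fin.card_Iio]
  apply Equiv.ext
  intro i
  apply Fin.ext
  rw [key p i, key q i]
  congr 1
  apply Finset.filter_congr
  intro j _

  exact h j i

lemma perm_val_eq {r s : ℕ} (h : r = s) (p : Equiv.Perm (Fin r)) (q : Equiv.Perm (Fin s))
    (hiff : ∀ i j, p i < p j ↔ q (Fin.cast h i) < q (Fin.cast h j)) :
    ∀ i, (p i : ℕ) = q (Fin.cast h i) := by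
  subst h
  have : p = q := perm_eq_of_orderIso p q hiff
  intro i; rw [this]; rfl


lemma emap_image_univ (S : Finset (Fin n)) : Finset.image (emap S) univ = S := by
  apply Finset.eq_of_subset_of_card_le
  · intro x hx
    obtain ⟨i, _, rfl⟩ := Finset.mem_image.1 hx
    exact emap_mem S i
  · rw [Finset.card_image_of_injective _ (emap_strictMono S).injective, card_univ,
      Fintype.card_fin]

lemma isEmb_of_pattern (π : Equiv.Perm (Fin n)) (ρ : Equiv.Perm (Fin k))
    (g : Fin k → Fin n) (hg : StrictMono g)
    (hpat : ∀ i j, ρ i < ρ j ↔ π (g i) < π (g j)) :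
    IsEmb π (Finset.image g univ) ρ := by
  set S := Finset.image g univ with hS
  have hcard : S.card = k := by
    rw [hS, Finset.card_image_of_injective _ hg.injective, card_univ, Fintype.card_fin]
  refine ⟨hcard, ?_⟩
  have hmem : ∀ x : Fin S.card, g (Fin.cast hcard x) ∈ S :=
    fun x => Finset.mem_image_of_mem _ (mem_univ _)
  have hg' : StrictMono fun i : Fin S.card => g (Fin.cast hcard i) := by
    intro i j hij; exact hg hij
  have huniq : (fun i : Fin S.card => g (Fin.cast hcard i)) = ⇑(S.orderEmbOfFin rfl) :=
    Finset.orderEmbOfFin_unique rfl hmem hg'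
  have hemap : ∀ i : Fin S.card, emap S i = g (Fin.cast hcard i) := by
    intro i
    rw [emap_eq_orderEmbOfFin, ← huniq]
  apply perm_val_eq hcard (red π S) ρ
  intro i j
  rw [red_lt_iff, hemap, hemap]
  exact (hpat _ _).symm

lemma isEmb_red_self (π : Equiv.Perm (Fin n)) (T : Finset (Fin n)) :
    IsEmb π T (red π T) :=
  ⟨rfl, fun _ => rfl⟩

lemma permLE_of_isEmb {π : Equiv.Perm (Fin n)} {S : Finset (Fin n)} {σ : Equiv.Perm (Fin m)}
    (h : IsEmb π S σ) : PermLE σ (red π S) := by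
  obtain ⟨hc, hv⟩ := h
  refine ⟨fun i => Fin.cast hc.symm i, fun i j hij => hij, ?_⟩
  intro i j
  have h1 : (red π S (Fin.cast hc.symm i) : ℕ) = σ i := by
    rw [hv]; congr 1
  have h2 : (red π S (Fin.cast hc.symm j) : ℕ) = σ j := by
    rw [hv]; congr 1
  rw [Fin.lt_def, Fin.lt_def, h1, h2]

lemma permLE_of_isEmb' {π : Equiv.Perm (Fin n)} {S : Finset (Fin n)} {σ : Equiv.Perm (Fin m)}
    (h : IsEmb π S σ) : PermLE (red π S) σ := by
  obtain ⟨hc, hv⟩ := h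
  refine ⟨fun i => Fin.cast hc i, fun i j hij => hij, ?_⟩
  intro i j
  rw [Fin.lt_def (a := red π S i), hv i, hv j, ← Fin.lt_def]

lemma permLE_refl (σ : Equiv.Perm (Fin m)) : PermLE σ σ :=
  ⟨id, strictMono_id, fun _ _ => Iff.rfl⟩

lemma permLE_trans {a b c : ℕ} {p : Equiv.Perm (Fin a)} {q : Equiv.Perm (Fin b)}
    {r : Equiv.Perm (Fin c)} (h1 : PermLE p q) (h2 : PermLE q r) : PermLE p r := by
  obtain ⟨f, hf, hfc⟩ := h1
  obtain ⟨g, hg, hgc⟩ := h2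
  exact ⟨g ∘ f, hg.comp hf, fun i j => (hfc i j).trans (hgc (f i) (f j))⟩

lemma length_le_of_permLE {a b : ℕ} {p : Equiv.Perm (Fin a)} {q : Equiv.Perm (Fin b)}
    (h : PermLE p q) : a ≤ b := by
  obtain ⟨f, hf, -⟩ := h
  simpa using Fintype.card_le_of_injective f hf.injective

lemma permLE_symm_of_eq {a b : ℕ} {p : Equiv.Perm (Fin a)} {q : Equiv.Perm (Fin b)}
    (hab : a = b) (h : PermLE p q) : PermLE q p := by
  subst hab
  obtain ⟨f, hf, hc⟩ := h
  have hfr : Set.range f = Set.range (id : Fin a → Fin a) := by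
    rw [Set.range_id]
    exact Set.range_eq_univ.2 ((Finite.injective_iff_surjective.1 hf.injective))
  have : f = id := (hf.range_inj strictMono_id).1 hfr
  subst this
  exact ⟨id, strictMono_id, fun i j => (hc i j).symm⟩

lemma permLE_red_mono (π : Equiv.Perm (Fin n)) {S T : Finset (Fin n)} (hST : S ⊆ T) :
    PermLE (red π S) (red π T) := by
  refine ⟨fun i => (T.orderIsoOfFin rfl).symm ⟨emap S i, hST (emap_mem S i)⟩, ?_, ?_⟩
  · intro i j hij
    have h1 : emap S i < emap S j := emap_strictMono S hij
    exact (T.orderIsoOfFin rfl).symm.lt_iff_lt.2 (Subtype.mk_lt_mk.2 h1)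
  · intro i j
    have he : ∀ i : Fin S.card,
        emap T ((T.orderIsoOfFin rfl).symm ⟨emap S i, hST (emap_mem S i)⟩) = emap S i := by
      intro i
      show (((T.orderIsoOfFin rfl) ((T.orderIsoOfFin rfl).symm ⟨emap S i, _⟩) : _) : Fin n) = _
      rw [OrderIso.apply_symm_apply]
    rw [red_lt_iff, red_lt_iff, he, he]

lemma isEmb_univ (π : Equiv.Perm (Fin n)) : IsEmb π Finset.univ π := by
  have := isEmb_of_pattern π π id strictMono_id (fun _ _ => Iff.rfl)
  rwa [Finset.image_id] at this

lemma permLE_red_le (π : Equiv.Perm (Fin n)) (T : Finset (Fin n)) :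
    PermLE (red π T) π :=
  permLE_trans (permLE_red_mono π (Finset.subset_univ T)) (permLE_of_isEmb' (isEmb_univ π))

lemma exists_emb_le_red {π : Equiv.Perm (Fin n)} {T : Finset (Fin n)}
    {lam : Equiv.Perm (Fin k)} (h : PermLE lam (red π T)) :
    ∃ S : Finset (Fin n), S ⊆ T ∧ IsEmb π S lam := by
  obtain ⟨f, hf, hc⟩ := h
  refine ⟨Finset.image (fun i => emap T (f i)) univ, ?_, ?_⟩
  · intro x hx
    obtain ⟨i, -, rfl⟩ := Finset.mem_image.1 hx
    exact emap_mem T (f i)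
  · refine isEmb_of_pattern π lam _ ((emap_strictMono T).comp hf) ?_
    intro i j
    rw [hc, red_lt_iff]

lemma exists_emb_of_le {π : Equiv.Perm (Fin n)} {lam : Equiv.Perm (Fin k)}
    (h : PermLE lam π) : ∃ T : Finset (Fin n), IsEmb π T lam := by
  have h2 : PermLE lam (red π univ) :=
    permLE_trans h (permLE_of_isEmb (isEmb_univ π))
  obtain ⟨S, -, hS⟩ := exists_emb_le_red h2
  exact ⟨S, hS⟩

lemma isEmb_congr {π : Equiv.Perm (Fin n)} {S : Finset (Fin n)} {r s : ℕ}
    {ρ : Equiv.Perm (Fin r)} {σ : Equiv.Perm (Fin s)} (hrs : r = s)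
    (hv : ∀ i, (ρ i : ℕ) = σ (Fin.cast hrs i)) (h : IsEmb π S ρ) : IsEmb π S σ := by
  obtain ⟨hc, hv'⟩ := h
  refine ⟨hc.trans hrs, fun i => ?_⟩
  rw [hv' i, hv]
  congr 1

lemma transport {π : Equiv.Perm (Fin n)} {lam : Equiv.Perm (Fin k)} {T : Finset (Fin n)}
    (hc : T.card = k) (hv : ∀ i, (red π T i : ℕ) = lam (Fin.cast hc i))
    (Q : Finset (Fin k)) :
    IsEmb π (Q.image fun q => emap T (Fin.cast hc.symm q)) (red lam Q) := by
  have hmono : StrictMono fun q : Fin k => emap T (Fin.cast hc.symm q) := by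
    intro a b hab
    exact emap_strictMono T hab
  have H := isEmb_of_pattern π (red lam Q)
      (fun i : Fin Q.card => emap T (Fin.cast hc.symm (emap Q i)))
      (hmono.comp (emap_strictMono Q)) ?_
  · have himg : Finset.image (fun i : Fin Q.card => emap T (Fin.cast hc.symm (emap Q i))) univ
        = Q.image (fun q => emap T (Fin.cast hc.symm q)) := by
      conv_rhs => rw [← emap_image_univ Q]
      rw [Finset.image_image]
      rfl
    rwa [himg] at H
  · intro i j
    rw [red_lt_iff]
    have hval : ∀ a : Fin k, (lam a : ℕ) = red π T (Fin.cast hc.symm a) := by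
      intro a
      rw [hv]
      congr 1
    rw [Fin.lt_def, hval, hval, ← Fin.lt_def, red_lt_iff]

lemma elt_eq_of_isEmb {π : Equiv.Perm (Fin n)} {T : Finset (Fin n)}
    {τ : Equiv.Perm (Fin k)} (h : IsEmb π T τ) :
    (⟨T.card, red π T⟩ : AllPerm) = ⟨k, τ⟩ := by
  obtain ⟨hc, hv⟩ := h
  subst hc
  congr 1
  apply Equiv.ext
  intro i
  apply Fin.ext
  rw [hv i]
  congr 1

lemma mem_ivl {σ : Equiv.Perm (Fin m)} {π : Equiv.Perm (Fin n)} {ρ : Equiv.Perm (Fin k)}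
    (h1 : PermLE σ ρ) (h2 : PermLE ρ π) (hm : m < k) (hn : k < n) :
    APlt ⟨m, σ⟩ (⟨k, ρ⟩ : AllPerm) ∧ APlt (⟨k, ρ⟩ : AllPerm) ⟨n, π⟩ := by
  refine ⟨⟨h1, fun hcon => ?_⟩, ⟨h2, fun hcon => ?_⟩⟩
  · have hh : k ≤ m := length_le_of_permLE hcon; omega
  · have hh : n ≤ k := length_le_of_permLE hcon; omega

lemma lengths_of_mem {σ : Equiv.Perm (Fin m)} {π : Equiv.Perm (Fin n)} {x : AllPerm}
    (hx : APlt ⟨m, σ⟩ x ∧ APlt x ⟨n, π⟩) : m < x.1 ∧ x.1 < n := by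
  obtain ⟨⟨h1, h2⟩, ⟨h3, h4⟩⟩ := hx
  have l1 : m ≤ x.1 := length_le_of_permLE h1
  have l2 : x.1 ≤ n := length_le_of_permLE h3
  constructor
  · rcases lt_or_eq_of_le l1 with h | h
    · exact h
    · exact absurd (permLE_symm_of_eq h h1) h2
  · rcases lt_or_eq_of_le l2 with h | h
    · exact h
    · exact absurd (permLE_symm_of_eq h h3) h4

lemma exists_not_mem_of_card_lt (S : Finset (Fin n)) (h : S.card < n) : ∃ z, z ∉ S := by
  by_contra hcon
  push_neg at hcon
  have h2 := Finset.eq_univ_iff_forall.2 hcon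
  rw [h2, card_univ, Fintype.card_fin] at h
  omega

noncomputable def eltOf (π : Equiv.Perm (Fin n)) (T : Finset (Fin n)) : AllPerm :=
  ⟨T.card, red π T⟩

lemma card_of_isEmb {π : Equiv.Perm (Fin n)} {S : Finset (Fin n)} {σ : Equiv.Perm (Fin m)}
    (h : IsEmb π S σ) : S.card = m := by
  obtain ⟨hc, -⟩ := h
  exact hc

lemma eltOf_mem_ivl {σ : Equiv.Perm (Fin m)} (π : Equiv.Perm (Fin n))
    (T S : Finset (Fin n)) (hS : IsEmb π S σ) (hST : S ⊆ T)
    (h1 : m < T.card) (h2 : T.card < n) :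
    APlt ⟨m, σ⟩ (eltOf π T) ∧ APlt (eltOf π T) ⟨n, π⟩ :=
  mem_ivl (permLE_trans (permLE_of_isEmb hS) (permLE_red_mono π hST))
    (permLE_red_le π T) h1 h2

lemma APle_eltOf_mono (π : Equiv.Perm (Fin n)) {U V : Finset (Fin n)} (hUV : U ⊆ V) :
    APle (eltOf π U) (eltOf π V) :=
  permLE_red_mono π hUV

lemma APle_eltOf_of_isEmb {π : Equiv.Perm (Fin n)} {x : AllPerm} {T : Finset (Fin n)}
    (hT : IsEmb π T x.2) : APle x (eltOf π T) :=
  permLE_of_isEmb hT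

lemma eltOf_eq_of_isEmb {π : Equiv.Perm (Fin n)} {T : Finset (Fin n)}
    {τ : Equiv.Perm (Fin k)} (h : IsEmb π T τ) : eltOf π T = ⟨k, τ⟩ :=
  elt_eq_of_isEmb h
end SzsAux
open Finset Equiv SzsAux in
/-- For permutations `σ < π` with `n − m ≥ 3`, the open interval
`(σ,π)` is disconnected if and only if `[σ,π]` is strongly zero split. -/
theorem stmt6 {m n : ℕ} (σ : Equiv.Perm (Fin m)) (π : Equiv.Perm (Fin n))
    (h : PermLT σ π) (h3 : 3 ≤ n - m) :
    DisconnRel APle {x : AllPerm | APlt ⟨m, σ⟩ x ∧ APlt x ⟨n, π⟩} ↔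
      StronglyZeroSplit σ π := by
  have hmn : m + 3 ≤ n := by
    have h1 : m ≤ n := length_le_of_permLE h.1
    omega
  have hext_mem : ∀ (S : Finset (Fin n)) (z : Fin n), IsEmb π S σ → z ∉ S →
      APlt ⟨m, σ⟩ (eltOf π (insert z S)) ∧ APlt (eltOf π (insert z S)) ⟨n, π⟩ := by
    intro S z hS hz
    have hc := card_of_isEmb hS
    refine eltOf_mem_ivl π _ S hS (Finset.subset_insert z S) ?_ ?_ <;>
      rw [Finset.card_insert_of_notMem hz, hc] <;> omega
  have hzex : ∀ S : Finset (Fin n), IsEmb π S σ → ∃ z, z ∉ S := by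
    intro S hS
    exact exists_not_mem_of_card_lt S (by rw [card_of_isEmb hS]; omega)
  constructor
  · -- disconnected → strongly zero split
    rintro ⟨A, B, hAne, hBne, hUn, hInt, hInc⟩
    have hnotboth : ∀ x : AllPerm, x ∈ A → x ∈ B → False := by
      intro x h1 h2
      have hx : x ∈ A ∩ B := ⟨h1, h2⟩
      rw [hInt] at hx
      exact hx
    have hsubA : ∀ x ∈ A, APlt ⟨m, σ⟩ x ∧ APlt x ⟨n, π⟩ := by
      intro x hx
      have hx2 : x ∈ A ∪ B := Or.inl hx
      rw [hUn] at hx2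
      exact hx2
    have hsubB : ∀ x ∈ B, APlt ⟨m, σ⟩ x ∧ APlt x ⟨n, π⟩ := by
      intro x hx
      have hx2 : x ∈ A ∪ B := Or.inr hx
      rw [hUn] at hx2
      exact hx2
    have hcov : ∀ x : AllPerm, (APlt ⟨m, σ⟩ x ∧ APlt x ⟨n, π⟩) → x ∈ A ∨ x ∈ B := by
      intro x hx
      have hx2 : x ∈ A ∪ B := by rw [hUn]; exact hx
      exact hx2
    have hsp : ∀ x y : AllPerm, (APlt ⟨m, σ⟩ x ∧ APlt x ⟨n, π⟩) →
        (APlt ⟨m, σ⟩ y ∧ APlt y ⟨n, π⟩) → APle x y → (x ∈ A ↔ y ∈ A) := by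
      intro x y hx hy hxy
      constructor
      · intro hxA
        rcases hcov y hy with hyA | hyB
        · exact hyA
        · exact absurd hxy (hInc x hxA y hyB).1
      · intro hyA
        rcases hcov x hx with hxA | hxB
        · exact hxA
        · exact absurd hxy (hInc y hyA x hxB).2
    have hABiff : ∀ x : AllPerm, (APlt ⟨m, σ⟩ x ∧ APlt x ⟨n, π⟩) → (x ∈ B ↔ x ∉ A) := by
      intro x hx
      constructor
      · intro hB hA
        exact hnotboth x hA hB
      · intro hnA
        rcases hcov x hx with hA | hB
        · exact absurd hA hnA
        · exact hB
    have hpee : ∀ (S : Finset (Fin n)) (z z' : Fin n), IsEmb π S σ → z ∉ S → z' ∉ S →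
        (eltOf π (insert z S) ∈ A ↔ eltOf π (insert z' S) ∈ A) := by
      intro S z z' hS hz hz'
      by_cases hzz : z = z'
      · rw [hzz]
      · have hc := card_of_isEmb hS
        have hz'' : z' ∉ insert z S := by
          rw [Finset.mem_insert]
          push_neg
          exact ⟨fun hcon => hzz hcon.symm, hz'⟩
        have hcard2 : (insert z' (insert z S)).card = m + 2 := by
          rw [Finset.card_insert_of_notMem hz'', Finset.card_insert_of_notMem hz, hc]
        have hbig := eltOf_mem_ivl π (insert z' (insert z S)) S hS
          ((Finset.subset_insert z S).trans (Finset.subset_insert z' _))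
          (by omega) (by omega)
        have c1 := hsp _ _ (hext_mem S z hS hz) hbig
          (APle_eltOf_mono π (Finset.subset_insert z' _))
        have c2 := hsp _ _ (hext_mem S z' hS hz') hbig
          (APle_eltOf_mono π (Finset.insert_subset_insert z' (Finset.subset_insert z S)))
        exact c1.trans c2.symm
    have hpz : ∀ (S₁ S₂ : Finset (Fin n)) (z : Fin n), IsEmb π S₁ σ → IsEmb π S₂ σ →
        z ∉ S₁ → z ∉ S₂ →
        (eltOf π (insert z S₁) ∈ A ↔ eltOf π (insert z S₂) ∈ A) := by
      intro S₁ S₂ z hS₁ hS₂ hz₁ hz₂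
      have hc₁ := card_of_isEmb hS₁
      have hc₂ := card_of_isEmb hS₂
      have hcc₁ : 1 < (S₁ᶜ).card := by
        rw [Finset.card_compl, hc₁, Fintype.card_fin]; omega
      have hcc₂ : 1 < (S₂ᶜ).card := by
        rw [Finset.card_compl, hc₂, Fintype.card_fin]; omega
      obtain ⟨x, hxmem, hxz⟩ := Finset.exists_mem_ne hcc₁ z
      obtain ⟨y, hymem, hyz⟩ := Finset.exists_mem_ne hcc₂ z
      have hx₁ : x ∉ S₁ := Finset.mem_compl.1 hxmem
      have hy₂ : y ∉ S₂ := Finset.mem_compl.1 hymem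
      have hDsub₁ : insert x S₁ ⊆ ({z} : Finset (Fin n))ᶜ := by
        intro a ha
        rw [Finset.mem_compl, Finset.mem_singleton]
        rcases Finset.mem_insert.1 ha with rfl | haS
        · exact hxz
        · rintro rfl; exact hz₁ haS
      have hDsub₂ : insert y S₂ ⊆ ({z} : Finset (Fin n))ᶜ := by
        intro a ha
        rw [Finset.mem_compl, Finset.mem_singleton]
        rcases Finset.mem_insert.1 ha with rfl | haS
        · exact hyz
        · rintro rfl; exact hz₂ haS
      have hDcard : (({z} : Finset (Fin n))ᶜ).card = n - 1 := by
        rw [Finset.card_compl, Finset.card_singleton, Fintype.card_fin]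
      have hDmem := eltOf_mem_ivl π (({z} : Finset (Fin n))ᶜ) S₁ hS₁
        ((Finset.subset_insert x S₁).trans hDsub₁) (by omega) (by omega)
      have c1 := hsp _ _ (hext_mem S₁ x hS₁ hx₁) hDmem (APle_eltOf_mono π hDsub₁)
      have c2 := hsp _ _ (hext_mem S₂ y hS₂ hy₂) hDmem (APle_eltOf_mono π hDsub₂)
      exact (hpee S₁ z x hS₁ hz₁ hx₁).trans
        (c1.trans (c2.symm.trans (hpee S₂ y z hS₂ hy₂ hz₂)))
    have hlink : ∀ (x : AllPerm), (APlt ⟨m, σ⟩ x ∧ APlt x ⟨n, π⟩) →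
        ∀ (T S : Finset (Fin n)) (z : Fin n), IsEmb π T x.2 → IsEmb π S σ → S ⊆ T →
        z ∈ T → z ∉ S → (x ∈ A ↔ eltOf π (insert z S) ∈ A) := by
      intro x hx T S z hT hS hST hzT hzS
      have hlen := lengths_of_mem hx
      have hTc := card_of_isEmb hT
      have hTmem := eltOf_mem_ivl π T S hS hST (by omega) (by omega)
      have l1 := hsp x (eltOf π T) hx hTmem (APle_eltOf_of_isEmb hT)
      have l2 := hsp _ _ (hext_mem S z hS hzS) hTmem
        (APle_eltOf_mono π (Finset.insert_subset_iff.2 ⟨hzT, hST⟩))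
      exact l1.trans l2.symm
    have hspreadA : ∀ (S : Finset (Fin n)) (z : Fin n), IsEmb π S σ → z ∉ S →
        eltOf π (insert z S) ∈ A → ∀ z', z' ∉ S → eltOf π (insert z' S) ∈ A := by
      intro S z hS hz hA z' hz'
      exact (hpee S z z' hS hz hz').1 hA
    have hspreadB : ∀ (S : Finset (Fin n)) (z : Fin n), IsEmb π S σ → z ∉ S →
        eltOf π (insert z S) ∈ B → ∀ z', z' ∉ S → eltOf π (insert z' S) ∈ B := by
      intro S z hS hz hB z' hz'
      have hnA : eltOf π (insert z S) ∉ A := (hABiff _ (hext_mem S z hS hz)).1 hB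
      have hnA' : eltOf π (insert z' S) ∉ A := fun hcon =>
        hnA ((hpee S z z' hS hz hz').2 hcon)
      exact (hABiff _ (hext_mem S z' hS hz')).2 hnA'
    refine ⟨{S | IsEmb π S σ ∧ ∀ z, z ∉ S → eltOf π (insert z S) ∈ A},
            {S | IsEmb π S σ ∧ ∀ z, z ∉ S → eltOf π (insert z S) ∈ B},
            ⟨?_, ?_, ?_, ?_, ?_⟩, ?_⟩
    · -- E₁ nonempty
      obtain ⟨a, haA⟩ := hAne
      have has := hsubA a haA
      obtain ⟨T, hT⟩ := exists_emb_of_le has.2.1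
      have hσT : PermLE σ (red π T) := permLE_trans has.1.1 (permLE_of_isEmb hT)
      obtain ⟨S, hST, hS⟩ := exists_emb_le_red hσT
      have hTc := card_of_isEmb hT
      have hSc := card_of_isEmb hS
      have hlen := lengths_of_mem has
      have hne : S ≠ T := by
        intro hcon
        rw [hcon, hTc] at hSc
        omega
      obtain ⟨z, hzT, hzS⟩ := Finset.exists_of_ssubset (hST.ssubset_of_ne hne)
      have hextA : eltOf π (insert z S) ∈ A := (hlink a has T S z hT hS hST hzT hzS).1 haA
      exact ⟨S, hS, hspreadA S z hS hzS hextA⟩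
    · -- E₂ nonempty
      obtain ⟨b, hbB⟩ := hBne
      have hbs := hsubB b hbB
      obtain ⟨T, hT⟩ := exists_emb_of_le hbs.2.1
      have hσT : PermLE σ (red π T) := permLE_trans hbs.1.1 (permLE_of_isEmb hT)
      obtain ⟨S, hST, hS⟩ := exists_emb_le_red hσT
      have hTc := card_of_isEmb hT
      have hSc := card_of_isEmb hS
      have hlen := lengths_of_mem hbs
      have hne : S ≠ T := by
        intro hcon
        rw [hcon, hTc] at hSc
        omega
      obtain ⟨z, hzT, hzS⟩ := Finset.exists_of_ssubset (hST.ssubset_of_ne hne)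
      have hbnA : b ∉ A := (hABiff b hbs).1 hbB
      have hextnA : eltOf π (insert z S) ∉ A := fun hcon =>
        hbnA ((hlink b hbs T S z hT hS hST hzT hzS).2 hcon)
      have hextB : eltOf π (insert z S) ∈ B :=
        (hABiff _ (hext_mem S z hS hzS)).2 hextnA
      exact ⟨S, hS, hspreadB S z hS hzS hextB⟩
    · -- union = EmbSet
      ext S
      constructor
      · rintro (⟨hS, -⟩ | ⟨hS, -⟩) <;> exact hS
      · intro hS
        obtain ⟨z, hz⟩ := hzex S hS
        rcases hcov (eltOf π (insert z S)) (hext_mem S z hS hz) with hA | hB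
        · exact Or.inl ⟨hS, hspreadA S z hS hz hA⟩
        · exact Or.inr ⟨hS, hspreadB S z hS hz hB⟩
    · -- disjoint
      rw [Set.eq_empty_iff_forall_notMem]
      rintro S ⟨⟨hS, hA⟩, ⟨-, hB⟩⟩
      obtain ⟨z, hz⟩ := hzex S hS
      exact hnotboth _ (hA z hz) (hB z hz)
    · -- zero sets disjoint
      rw [Set.eq_empty_iff_forall_notMem]
      rintro z ⟨hz1, hz2⟩
      simp only [ZSet, Set.mem_iUnion, exists_prop] at hz1 hz2
      obtain ⟨S₁, hS₁, hzc₁⟩ := hz1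
      obtain ⟨S₂, hS₂, hzc₂⟩ := hz2
      have hz₁ : z ∉ S₁ := Finset.mem_compl.1 (Finset.mem_coe.1 hzc₁)
      have hz₂ : z ∉ S₂ := Finset.mem_compl.1 (Finset.mem_coe.1 hzc₂)
      have hA := hS₁.2 z hz₁
      have hB := hS₂.2 z hz₂
      exact hnotboth _ ((hpz S₁ S₂ z hS₁.1 hS₂.1 hz₁ hz₂).1 hA) hB
    · -- strong condition
      intro S₁ hS₁ S₂ hS₂ hcon
      obtain ⟨z₁, hz₁c, z₂, hz₂c, kk, τ, he₁, he₂⟩ := hcon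
      have hz₁ : z₁ ∉ S₁ := Finset.mem_compl.1 (Finset.mem_coe.1 hz₁c)
      have hz₂ : z₂ ∉ S₂ := Finset.mem_compl.1 (Finset.mem_coe.1 hz₂c)
      have e₁ : eltOf π (insert z₁ S₁) = ⟨kk, τ⟩ := eltOf_eq_of_isEmb he₁
      have e₂ : eltOf π (insert z₂ S₂) = ⟨kk, τ⟩ := eltOf_eq_of_isEmb he₂
      have hA := hS₁.2 z₁ hz₁
      have hB := hS₂.2 z₂ hz₂
      rw [e₁] at hA
      rw [e₂] at hB
      exact hnotboth _ hA hB
  · -- strongly zero split → disconnected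
    rintro ⟨E₁, E₂, ⟨hne₁, hne₂, hcup, hcap, hZ⟩, hstrong⟩
    have hE : ∀ S : Finset (Fin n), S ∈ E₁ ∪ E₂ ↔ IsEmb π S σ := by
      intro S
      rw [hcup]
      exact Iff.rfl
    have hzdis : ∀ S₁ ∈ E₁, ∀ S₂ ∈ E₂, ∀ w : Fin n, w ∉ S₁ → w ∉ S₂ → False := by
      intro S₁ hS₁ S₂ hS₂ w hw₁ hw₂
      have hmem : w ∈ ZSet E₁ ∩ ZSet E₂ := by
        constructor
        · exact Set.mem_biUnion hS₁ (Finset.mem_coe.2 (Finset.mem_compl.2 hw₁))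
        · exact Set.mem_biUnion hS₂ (Finset.mem_coe.2 (Finset.mem_compl.2 hw₂))
      rw [hZ] at hmem
      exact hmem
    have hss : ∀ T : Finset (Fin n), T.card < n → ∀ S S' : Finset (Fin n),
        S ⊆ T → S' ⊆ T → S ∈ E₁ → S' ∈ E₂ → False := by
      intro T hTc S S' hS hS' h1 h2
      obtain ⟨w, hw⟩ := exists_not_mem_of_card_lt T hTc
      exact hzdis S h1 S' h2 w (fun hcon => hw (hS hcon)) (fun hcon => hw (hS' hcon))
    have hfind : ∀ x : AllPerm, (APlt ⟨m, σ⟩ x ∧ APlt x ⟨n, π⟩) →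
        ∃ T S : Finset (Fin n), IsEmb π T x.2 ∧ S ⊆ T ∧ IsEmb π S σ := by
      intro x hx
      obtain ⟨T, hT⟩ := exists_emb_of_le hx.2.1
      have hσT : PermLE σ (red π T) := permLE_trans hx.1.1 (permLE_of_isEmb hT)
      obtain ⟨S, hST, hS⟩ := exists_emb_le_red hσT
      exact ⟨T, S, hT, hST, hS⟩
    have noboth : ∀ x : AllPerm, (APlt ⟨m, σ⟩ x ∧ APlt x ⟨n, π⟩) →
        ∀ T₁ S₁ T₂ S₂ : Finset (Fin n), IsEmb π T₁ x.2 → S₁ ⊆ T₁ → S₁ ∈ E₁ →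
        IsEmb π T₂ x.2 → S₂ ⊆ T₂ → S₂ ∈ E₂ → False := by
      intro x hx T₁ S₁ T₂ S₂ hT₁ hsub₁ hSE₁ hT₂ hsub₂ hSE₂
      have hlen := lengths_of_mem hx
      obtain ⟨P, hP⟩ := exists_emb_of_le hx.1.1
      have hPc := card_of_isEmb hP
      obtain ⟨hPc', hPv⟩ := hP
      obtain ⟨q, hq⟩ := exists_not_mem_of_card_lt P (by rw [hPc]; exact hlen.1)
      obtain ⟨hc₁, hv₁⟩ := hT₁
      obtain ⟨hc₂, hv₂⟩ := hT₂
      have ht₁ := transport hc₁ hv₁ (insert q P)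
      have ht₂ := transport hc₂ hv₂ (insert q P)
      have htP₁ := transport hc₁ hv₁ P
      have htP₂ := transport hc₂ hv₂ P
      have hσ₁ : IsEmb π (P.image fun a => emap T₁ (Fin.cast hc₁.symm a)) σ :=
        isEmb_congr hPc' hPv htP₁
      have hσ₂ : IsEmb π (P.image fun a => emap T₂ (Fin.cast hc₂.symm a)) σ :=
        isEmb_congr hPc' hPv htP₂
      have himgsub₁ : (P.image fun a => emap T₁ (Fin.cast hc₁.symm a)) ⊆ T₁ := by
        intro a ha
        obtain ⟨b, -, rfl⟩ := Finset.mem_image.1 ha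
        exact emap_mem T₁ _
      have himgsub₂ : (P.image fun a => emap T₂ (Fin.cast hc₂.symm a)) ⊆ T₂ := by
        intro a ha
        obtain ⟨b, -, rfl⟩ := Finset.mem_image.1 ha
        exact emap_mem T₂ _
      have hS₁' : (P.image fun a => emap T₁ (Fin.cast hc₁.symm a)) ∈ E₁ := by
        rcases (hE _).2 hσ₁ with hh | hh
        · exact hh
        · exact absurd (hss T₁ (by rw [hc₁]; exact hlen.2) S₁ _ hsub₁ himgsub₁ hSE₁ hh) id
      have hS₂' : (P.image fun a => emap T₂ (Fin.cast hc₂.symm a)) ∈ E₂ := by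
        rcases (hE _).2 hσ₂ with hh | hh
        · exact absurd (hss T₂ (by rw [hc₂]; exact hlen.2) _ S₂ himgsub₂ hsub₂ hh hSE₂) id
        · exact hh
      have hmono₁ : StrictMono fun a : Fin x.1 => emap T₁ (Fin.cast hc₁.symm a) := by
        intro a b hab
        exact emap_strictMono T₁ hab
      have hmono₂ : StrictMono fun a : Fin x.1 => emap T₂ (Fin.cast hc₂.symm a) := by
        intro a b hab
        exact emap_strictMono T₂ hab
      have himg₁ : (insert q P).image (fun a => emap T₁ (Fin.cast hc₁.symm a)) =
          insert (emap T₁ (Fin.cast hc₁.symm q))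
            (P.image fun a => emap T₁ (Fin.cast hc₁.symm a)) :=
        Finset.image_insert _ q P
      have himg₂ : (insert q P).image (fun a => emap T₂ (Fin.cast hc₂.symm a)) =
          insert (emap T₂ (Fin.cast hc₂.symm q))
            (P.image fun a => emap T₂ (Fin.cast hc₂.symm a)) :=
        Finset.image_insert _ q P
      have hz₁ : emap T₁ (Fin.cast hc₁.symm q) ∉
          (P.image fun a => emap T₁ (Fin.cast hc₁.symm a)) := by
        intro hcon
        obtain ⟨b, hbP, hbe⟩ := Finset.mem_image.1 hcon
        exact hq (hmono₁.injective hbe ▸ hbP)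
      have hz₂ : emap T₂ (Fin.cast hc₂.symm q) ∉
          (P.image fun a => emap T₂ (Fin.cast hc₂.symm a)) := by
        intro hcon
        obtain ⟨b, hbP, hbe⟩ := Finset.mem_image.1 hcon
        exact hq (hmono₂.injective hbe ▸ hbP)
      refine hstrong _ hS₁' _ hS₂' ?_
      refine ⟨emap T₁ (Fin.cast hc₁.symm q),
        Finset.mem_coe.2 (Finset.mem_compl.2 hz₁),
        emap T₂ (Fin.cast hc₂.symm q),
        Finset.mem_coe.2 (Finset.mem_compl.2 hz₂),
        (insert q P).card, red x.2 (insert q P), ?_, ?_⟩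
      · rw [← himg₁]
        exact ht₁
      · rw [← himg₂]
        exact ht₂
    refine ⟨{x : AllPerm | (APlt ⟨m, σ⟩ x ∧ APlt x ⟨n, π⟩) ∧
        ∃ T S : Finset (Fin n), IsEmb π T x.2 ∧ S ⊆ T ∧ S ∈ E₁},
      {x : AllPerm | (APlt ⟨m, σ⟩ x ∧ APlt x ⟨n, π⟩) ∧
        ∃ T S : Finset (Fin n), IsEmb π T x.2 ∧ S ⊆ T ∧ S ∈ E₂}, ?_, ?_, ?_, ?_, ?_⟩
    · -- A nonempty
      obtain ⟨S, hSE⟩ := hne₁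
      have hS : IsEmb π S σ := (hE S).1 (Or.inl hSE)
      obtain ⟨z, hz⟩ := hzex S hS
      refine ⟨eltOf π (insert z S), hext_mem S z hS hz,
        insert z S, S, isEmb_red_self π (insert z S), Finset.subset_insert z S, hSE⟩
    · -- B nonempty
      obtain ⟨S, hSE⟩ := hne₂
      have hS : IsEmb π S σ := (hE S).1 (Or.inr hSE)
      obtain ⟨z, hz⟩ := hzex S hS
      refine ⟨eltOf π (insert z S), hext_mem S z hS hz,
        insert z S, S, isEmb_red_self π (insert z S), Finset.subset_insert z S, hSE⟩
    · -- union
      ext x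
      constructor
      · rintro (⟨hx, -⟩ | ⟨hx, -⟩) <;> exact hx
      · intro hx
        obtain ⟨T, S, hT, hST, hS⟩ := hfind x hx
        rcases (hE S).2 hS with hh | hh
        · exact Or.inl ⟨hx, T, S, hT, hST, hh⟩
        · exact Or.inr ⟨hx, T, S, hT, hST, hh⟩
    · -- disjoint
      rw [Set.eq_empty_iff_forall_notMem]
      rintro x ⟨⟨hx, T₁, S₁, u1, u2, u3⟩, ⟨-, T₂, S₂, v1, v2, v3⟩⟩
      exact noboth x hx T₁ S₁ T₂ S₂ u1 u2 u3 v1 v2 v3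
    · -- incomparability
      rintro a ⟨has, Ta, Sa, ha1, ha2, ha3⟩ b ⟨hbs, Tb, Sb, hb1, hb2, hb3⟩
      constructor
      · intro hab
        have h1 : PermLE a.2 (red π Tb) := permLE_trans hab (permLE_of_isEmb hb1)
        obtain ⟨T', hT'sub, hT'⟩ := exists_emb_le_red h1
        have h2 : PermLE σ (red π T') := permLE_trans has.1.1 (permLE_of_isEmb hT')
        obtain ⟨S, hSsub, hS⟩ := exists_emb_le_red h2
        have hTbc : Tb.card < n := by
          rw [card_of_isEmb hb1]
          exact (lengths_of_mem hbs).2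
        rcases (hE S).2 hS with hh | hh
        · exact hss Tb hTbc S Sb (hSsub.trans hT'sub) hb2 hh hb3
        · exact noboth a has Ta Sa T' S ha1 ha2 ha3 hT' hSsub hh
      · intro hba
        have h1 : PermLE b.2 (red π Ta) := permLE_trans hba (permLE_of_isEmb ha1)
        obtain ⟨T', hT'sub, hT'⟩ := exists_emb_le_red h1
        have h2 : PermLE σ (red π T') := permLE_trans hbs.1.1 (permLE_of_isEmb hT')
        obtain ⟨S, hSsub, hS⟩ := exists_emb_le_red h2
        have hTac : Ta.card < n := by
          rw [card_of_isEmb ha1]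
          exact (lengths_of_mem has).2
        rcases (hE S).2 hS with hh | hh
        · exact noboth b hbs T' S Tb Sb hT' hSsub hh hb1 hb2 hb3
        · exact hss Ta hTac Sa S ha2 (hSsub.trans hT'sub) ha3 hh
end

section
/- Let σ < π be permutations in the classical permutation pattern order, with σ of length m and π of length n, n − m ≥ 3, and suppose [σ,π] is strongly zero split via the partition E₁, E₂ of its embedding set. Then the open interval (σ,π) is disconnected with components P_i = {λ : σ < λ < π and λ = red(π|_{Fin n ∖ D}) for some D ⊆ Z(E_i)} for i = 1,2; that is, P₁ and P₂ are disjoint nonempty sets whose union is (σ,π), and every element of P₁ is incomparable with every element of P₂. -/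
attribute [local instance] Classical.propDecidable

section Aux
open Finset Equiv

variable {m n k c : ℕ}

lemma red_lt_iff (π : Equiv.Perm (Fin n)) (S : Finset (Fin n)) (i j : Fin S.card) :
    red π S i < red π S j ↔ π (S.orderEmbOfFin rfl i) < π (S.orderEmbOfFin rfl j) := by
  have hcard : (S.image fun x => π x).card = S.card :=
    Finset.card_image_of_injective _ π.injective
  unfold red
  simp only [Equiv.ofBijective_apply]
  rw [← OrderIso.lt_iff_lt ((S.image fun x => π x).orderIsoOfFin hcard)]
  simp only [OrderIso.apply_symm_apply]
  simp [Subtype.mk_lt_mk, Finset.coe_orderIsoOfFin_apply]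

/-- two permutations with the same comparison data are equal -/
lemma perm_eq_of_lt_iff (f g : Equiv.Perm (Fin c))
    (h : ∀ i j, f i < f j ↔ g i < g j) : ∀ x, f x = g x := by
  have hsm : StrictMono (fun x => f (g.symm x)) := by
    intro a b hab
    rw [h]
    simpa using hab
  have hmem : ∀ x, (fun x => f (g.symm x)) x ∈ (Finset.univ : Finset (Fin c)) := by
    simp
  have hid : ∀ x : Fin c, (id : Fin c → Fin c) x ∈ (Finset.univ : Finset (Fin c)) := by simp
  have h1 := Finset.orderEmbOfFin_unique (Finset.card_fin c) hmem hsm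
  have h2 := Finset.orderEmbOfFin_unique (Finset.card_fin c) hid strictMono_id
  have h3 : ∀ x, f (g.symm x) = x := by
    intro x
    calc f (g.symm x) = (Finset.univ : Finset (Fin c)).orderEmbOfFin (Finset.card_fin c) x := by
            exact congrFun h1 x
      _ = x := (congrFun h2 x).symm
  intro x
  have := h3 (g x)
  simpa using this

end Aux
lemma orderEmb_cast {α : Type*} [LinearOrder α] (T : Finset α) {k : ℕ} (hT : T.card = k)
    (i : Fin T.card) : T.orderEmbOfFin rfl i = T.orderEmbOfFin hT (Fin.cast hT i) := by
  have hsm : StrictMono (fun i : Fin T.card => T.orderEmbOfFin hT (Fin.cast hT i)) := by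
    intro a b hab
    exact (T.orderEmbOfFin hT).strictMono hab
  have hmem : ∀ i : Fin T.card, T.orderEmbOfFin hT (Fin.cast hT i) ∈ T := fun i =>
    Finset.orderEmbOfFin_mem T hT _
  have h := Finset.orderEmbOfFin_unique
    (f := fun i : Fin T.card => T.orderEmbOfFin hT (Fin.cast hT i)) rfl hmem hsm
  exact (congrFun h i).symm

lemma isEmb_iff_of_map {n k : ℕ} (π : Equiv.Perm (Fin n)) (T : Finset (Fin n))
    (lam : Equiv.Perm (Fin k)) (hT : T.card = k) (e : Fin k → Fin n)
    (hsm : StrictMono e) (hmem : ∀ x, e x ∈ T) :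
    IsEmb π T lam ↔ ∀ i j, lam i < lam j ↔ π (e i) < π (e j) := by
  have he : ∀ x, e x = T.orderEmbOfFin hT x := by
    intro x; exact congrFun (Finset.orderEmbOfFin_unique hT hmem hsm) x
  have hoe : ∀ i : Fin T.card, (T.orderEmbOfFin rfl i : Fin n) = e (Fin.cast hT i) := by
    intro i; rw [he (Fin.cast hT i)]; exact orderEmb_cast T hT i
  constructor
  · rintro ⟨h, hv⟩ i j
    have hvi := hv (Fin.cast hT.symm i)
    have hvj := hv (Fin.cast hT.symm j)
    have hci : Fin.cast h (Fin.cast hT.symm i) = i := rfl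
    have hcj : Fin.cast h (Fin.cast hT.symm j) = j := rfl
    rw [hci] at hvi; rw [hcj] at hvj
    have hred := red_lt_iff π T (Fin.cast hT.symm i) (Fin.cast hT.symm j)
    rw [hoe, hoe] at hred
    have hei : e (Fin.cast hT (Fin.cast hT.symm i)) = e i := rfl
    have hej : e (Fin.cast hT (Fin.cast hT.symm j)) = e j := rfl
    rw [hei, hej] at hred
    rw [← hred, Fin.lt_def, Fin.lt_def, hvi, hvj, ← Fin.lt_def]
  · intro hcmp
    refine ⟨hT, ?_⟩
    set g : Equiv.Perm (Fin T.card) :=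
      (finCongr hT).trans (lam.trans (finCongr hT.symm)) with hg
    have hgval : ∀ x : Fin T.card, ((g x : Fin T.card) : ℕ) = ((lam (Fin.cast hT x)) : ℕ) :=
      fun x => rfl
    have hglt : ∀ i j', g i < g j' ↔ lam (Fin.cast hT i) < lam (Fin.cast hT j') :=
      fun i j' => Iff.rfl
    have heq := perm_eq_of_lt_iff (red π T) g ?_
    · intro i
      rw [heq i, hgval i]
    · intro i j'
      rw [red_lt_iff, hoe, hoe, ← hcmp, hglt]
lemma strictMono_fin_id {c : ℕ} (f : Fin c → Fin c) (h : StrictMono f) : ∀ x, f x = x := by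
  have hmem : ∀ x, f x ∈ (Finset.univ : Finset (Fin c)) := by simp
  have hid : ∀ x : Fin c, (id : Fin c → Fin c) x ∈ (Finset.univ : Finset (Fin c)) := by simp
  have h1 := Finset.orderEmbOfFin_unique (Finset.card_fin c) hmem h
  have h2 := Finset.orderEmbOfFin_unique (Finset.card_fin c) hid strictMono_id
  intro x
  rw [congrFun h1 x, ← congrFun h2 x]; rfl

lemma strictMono_fin_cast {a b : ℕ} (h : a = b) (f : Fin a → Fin b) (hf : StrictMono f) :
    ∀ x, f x = Fin.cast h x := by
  subst h
  exact strictMono_fin_id f hf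

lemma permLE_iff_exists_emb {m n : ℕ} (τ : Equiv.Perm (Fin m)) (π : Equiv.Perm (Fin n)) :
    PermLE τ π ↔ ∃ T : Finset (Fin n), IsEmb π T τ := by
  constructor
  · rintro ⟨f, hsm, hc⟩
    refine ⟨Finset.image f Finset.univ, ?_⟩
    have hcard : (Finset.image f Finset.univ).card = m := by
      rw [Finset.card_image_of_injective _ hsm.injective, Finset.card_fin]
    exact (isEmb_iff_of_map π _ τ hcard f hsm
      (fun x => Finset.mem_image_of_mem f (Finset.mem_univ x))).2 hc
  · rintro ⟨T, hE⟩
    obtain ⟨hT, -⟩ := id hE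
    exact ⟨T.orderEmbOfFin hT, (T.orderEmbOfFin hT).strictMono,
      (isEmb_iff_of_map π T τ hT _ (T.orderEmbOfFin hT).strictMono
        (fun x => Finset.orderEmbOfFin_mem T hT x)).1 hE⟩

lemma isEmb_red {n : ℕ} (π : Equiv.Perm (Fin n)) (T : Finset (Fin n)) :
    IsEmb π T (red π T) :=
  (isEmb_iff_of_map π T (red π T) rfl (T.orderEmbOfFin rfl)
    (T.orderEmbOfFin rfl).strictMono (fun x => Finset.orderEmbOfFin_mem T rfl x)).2
    (fun i j => red_lt_iff π T i j)

lemma isEmb_map {n k jj : ℕ} (π : Equiv.Perm (Fin n)) (lam : Equiv.Perm (Fin k))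
    (e : Fin k → Fin n) (hsm : StrictMono e)
    (hc : ∀ i j, lam i < lam j ↔ π (e i) < π (e j))
    (U : Finset (Fin k)) (μ : Equiv.Perm (Fin jj)) (hU : IsEmb lam U μ) :
    IsEmb π (U.image e) μ := by
  obtain ⟨hUc, -⟩ := id hU
  have hcard : (U.image e).card = jj := by
    rw [Finset.card_image_of_injective _ hsm.injective]; exact hUc
  have hμ := (isEmb_iff_of_map lam U μ hUc (U.orderEmbOfFin hUc)
    (U.orderEmbOfFin hUc).strictMono (fun x => Finset.orderEmbOfFin_mem U hUc x)).1 hU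
  refine (isEmb_iff_of_map π (U.image e) μ hcard (fun i => e (U.orderEmbOfFin hUc i))
    (hsm.comp (U.orderEmbOfFin hUc).strictMono)
    (fun x => Finset.mem_image_of_mem e (Finset.orderEmbOfFin_mem U hUc x))).2 ?_
  intro i j
  rw [hμ, hc]

lemma permLE_len {m n : ℕ} {σ : Equiv.Perm (Fin m)} {π : Equiv.Perm (Fin n)}
    (h : PermLE σ π) : m ≤ n := by
  obtain ⟨f, hsm, -⟩ := h
  simpa using Fintype.card_le_of_injective f hsm.injective

lemma permLE_rev_of_len_eq {m k : ℕ} {σ : Equiv.Perm (Fin m)} {τ : Equiv.Perm (Fin k)}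
    (h : PermLE σ τ) (hmk : m = k) : PermLE τ σ := by
  subst hmk
  obtain ⟨f, hsm, hc⟩ := h
  have hid := strictMono_fin_id f hsm
  refine ⟨id, strictMono_id, fun i j => ?_⟩
  have := hc i j
  rw [hid i, hid j] at this
  exact this.symm

lemma permLT_len_lt {m k : ℕ} {σ : Equiv.Perm (Fin m)} {τ : Equiv.Perm (Fin k)}
    (h : PermLT σ τ) : m < k := by
  rcases lt_or_eq_of_le (permLE_len h.1) with h' | h'
  · exact h'
  · exact absurd (permLE_rev_of_len_eq h.1 h') h.2

lemma permLE_of_univ_emb {n k : ℕ} {π : Equiv.Perm (Fin n)} {τ : Equiv.Perm (Fin k)}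
    (h : IsEmb π Finset.univ τ) : PermLE π τ := by
  obtain ⟨hu, -⟩ := id h
  have hnk : n = k := by rw [← hu, Finset.card_fin]
  have hpat := (isEmb_iff_of_map π Finset.univ τ hu (Finset.univ.orderEmbOfFin hu)
    (Finset.univ.orderEmbOfFin hu).strictMono (fun x => Finset.mem_univ _)).1 h
  have hcast := strictMono_fin_cast hnk.symm (Finset.univ.orderEmbOfFin hu)
    (Finset.univ.orderEmbOfFin hu).strictMono
  refine ⟨fun i => Fin.cast hnk i, fun a b hab => hab, fun i j => ?_⟩
  have := hpat (Fin.cast hnk i) (Fin.cast hnk j)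
  rw [hcast (Fin.cast hnk i), hcast (Fin.cast hnk j)] at this
  have hci : Fin.cast hnk.symm (Fin.cast hnk i) = i := rfl
  have hcj : Fin.cast hnk.symm (Fin.cast hnk j) = j := rfl
  rw [hci, hcj] at this
  exact this.symm

lemma permLE_red_of_subset {m n : ℕ} {σ : Equiv.Perm (Fin m)} {π : Equiv.Perm (Fin n)}
    {S T : Finset (Fin n)} (hE : IsEmb π S σ) (hsub : S ⊆ T) : PermLE σ (red π T) := by
  obtain ⟨hS, -⟩ := id hE
  have hpat := (isEmb_iff_of_map π S σ hS (S.orderEmbOfFin hS)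
    (S.orderEmbOfFin hS).strictMono (fun x => Finset.orderEmbOfFin_mem S hS x)).1 hE
  set f : Fin m → Fin T.card := fun i =>
    (T.orderIsoOfFin rfl).symm ⟨S.orderEmbOfFin hS i, hsub (Finset.orderEmbOfFin_mem S hS i)⟩
    with hf
  have hoT : ∀ i, (T.orderEmbOfFin rfl (f i) : Fin n) = S.orderEmbOfFin hS i := by
    intro i
    rw [← Finset.coe_orderIsoOfFin_apply, hf]
    simp only [OrderIso.apply_symm_apply]
  refine ⟨f, ?_, fun i j => ?_⟩
  · intro a b hab
    have h1 : (⟨S.orderEmbOfFin hS a, hsub (Finset.orderEmbOfFin_mem S hS a)⟩ : {x // x ∈ T}) <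
        ⟨S.orderEmbOfFin hS b, hsub (Finset.orderEmbOfFin_mem S hS b)⟩ :=
      Subtype.mk_lt_mk.2 ((S.orderEmbOfFin hS).strictMono hab)
    exact (T.orderIsoOfFin rfl).symm.strictMono h1
  · rw [red_lt_iff, hoT i, hoT j]
    exact hpat i j
lemma main_incomp {m n : ℕ} (σ : Equiv.Perm (Fin m)) (π : Equiv.Perm (Fin n))
    (F₁ F₂ : Set (Finset (Fin n)))
    (hUn : F₁ ∪ F₂ = EmbSet σ π)
    (hZ : ZSet F₁ ∩ ZSet F₂ = ∅)
    (hSC : StrongCondition π F₁ F₂)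
    (a b : AllPerm)
    (hσa : APlt ⟨m, σ⟩ a) (haπ : APlt a ⟨n, π⟩) (hbπ : APlt b ⟨n, π⟩)
    (D₁ : Finset (Fin n)) (hD₁ : (↑D₁ : Set (Fin n)) ⊆ ZSet F₁) (hE₁ : IsEmb π D₁ᶜ a.2)
    (D₂ : Finset (Fin n)) (hD₂ : (↑D₂ : Set (Fin n)) ⊆ ZSet F₂) (hE₂ : IsEmb π D₂ᶜ b.2)
    (hab : APle a b) : False := by
  have hma : m < a.1 := permLT_len_lt (⟨hσa.1, hσa.2⟩ : PermLT σ a.2)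
  obtain ⟨U, hU⟩ := (permLE_iff_exists_emb σ a.2).1 hσa.1
  obtain ⟨hUc, -⟩ := id hU
  have hUne : (Uᶜ : Finset (Fin a.1)).Nonempty := by
    rw [← Finset.card_pos, Finset.card_compl, hUc, Fintype.card_fin]
    omega
  obtain ⟨u, hu⟩ := hUne
  have huU : u ∉ U := Finset.mem_compl.1 hu
  set V : Finset (Fin a.1) := insert u U with hV
  have hτ : IsEmb a.2 V (red a.2 V) := isEmb_red a.2 V
  -- side 1
  obtain ⟨h₁, -⟩ := id hE₁
  set e₁ := (D₁ᶜ).orderEmbOfFin h₁ with he₁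
  have hpat₁ : ∀ i j, a.2 i < a.2 j ↔ π (e₁ i) < π (e₁ j) :=
    (isEmb_iff_of_map π D₁ᶜ a.2 h₁ e₁ e₁.strictMono
      (fun x => Finset.orderEmbOfFin_mem _ h₁ x)).1 hE₁
  set S₁ := U.image e₁ with hS₁
  have hS₁emb : IsEmb π S₁ σ := isEmb_map π a.2 e₁ e₁.strictMono hpat₁ U σ hU
  have hT₁emb : IsEmb π (V.image e₁) (red a.2 V) :=
    isEmb_map π a.2 e₁ e₁.strictMono hpat₁ V (red a.2 V) hτ
  have himg₁ : V.image e₁ = insert (e₁ u) S₁ := Finset.image_insert _ u U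
  have hz₁ : e₁ u ∉ S₁ := by
    intro hmem
    obtain ⟨v, hv, heq⟩ := Finset.mem_image.1 hmem
    exact huU (e₁.injective heq ▸ hv)
  have hS₁sub : S₁ ⊆ D₁ᶜ := by
    intro x hx
    obtain ⟨v, hv, heq⟩ := Finset.mem_image.1 hx
    exact heq ▸ Finset.orderEmbOfFin_mem _ h₁ v
  have hD₁sub : D₁ ⊆ S₁ᶜ := by
    intro x hx
    rw [Finset.mem_compl]
    intro hxS
    exact (Finset.mem_compl.1 (hS₁sub hxS)) hx
  have hS₁F₁ : S₁ ∈ F₁ := by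
    have hS₁mem : S₁ ∈ F₁ ∪ F₂ := by rw [hUn]; exact hS₁emb
    rcases hS₁mem with h' | h'
    · exact h'
    · exfalso
      have hsub2 : (↑(S₁ᶜ) : Set (Fin n)) ⊆ ZSet F₂ :=
        Set.subset_biUnion_of_mem (u := fun S : Finset (Fin n) => ((Sᶜ : Finset (Fin n)) : Set (Fin n))) h'
      have hsub3 : (↑D₁ : Set (Fin n)) ⊆ ZSet F₁ ∩ ZSet F₂ :=
        Set.subset_inter hD₁ (le_trans (Finset.coe_subset.2 hD₁sub) hsub2)
      rw [hZ] at hsub3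
      have hD₁e : D₁ = ∅ := Finset.coe_eq_empty.1 (Set.subset_empty_iff.1 hsub3)
      rw [hD₁e, Finset.compl_empty] at hE₁
      exact haπ.2 (permLE_of_univ_emb hE₁)
  -- side 2
  obtain ⟨U', hU'⟩ := (permLE_iff_exists_emb a.2 b.2).1 hab
  obtain ⟨h₂, -⟩ := id hE₂
  set e₂ := (D₂ᶜ).orderEmbOfFin h₂ with he₂
  have hpat₂ : ∀ i j, b.2 i < b.2 j ↔ π (e₂ i) < π (e₂ j) :=
    (isEmb_iff_of_map π D₂ᶜ b.2 h₂ e₂ e₂.strictMono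
      (fun x => Finset.orderEmbOfFin_mem _ h₂ x)).1 hE₂
  set T := U'.image e₂ with hT
  have hTemb : IsEmb π T a.2 := isEmb_map π b.2 e₂ e₂.strictMono hpat₂ U' a.2 hU'
  have hTsub : T ⊆ D₂ᶜ := by
    intro x hx
    obtain ⟨v, hv, heq⟩ := Finset.mem_image.1 hx
    exact heq ▸ Finset.orderEmbOfFin_mem _ h₂ v
  obtain ⟨h₃, -⟩ := id hTemb
  set e₃ := T.orderEmbOfFin h₃ with he₃
  have hpat₃ : ∀ i j, a.2 i < a.2 j ↔ π (e₃ i) < π (e₃ j) :=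
    (isEmb_iff_of_map π T a.2 h₃ e₃ e₃.strictMono
      (fun x => Finset.orderEmbOfFin_mem _ h₃ x)).1 hTemb
  set S₂ := U.image e₃ with hS₂
  have hS₂emb : IsEmb π S₂ σ := isEmb_map π a.2 e₃ e₃.strictMono hpat₃ U σ hU
  have hT₂emb : IsEmb π (V.image e₃) (red a.2 V) :=
    isEmb_map π a.2 e₃ e₃.strictMono hpat₃ V (red a.2 V) hτ
  have himg₂ : V.image e₃ = insert (e₃ u) S₂ := Finset.image_insert _ u U
  have hz₂ : e₃ u ∉ S₂ := by
    intro hmem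
    obtain ⟨v, hv, heq⟩ := Finset.mem_image.1 hmem
    exact huU (e₃.injective heq ▸ hv)
  have hS₂sub : S₂ ⊆ D₂ᶜ := by
    intro x hx
    obtain ⟨v, hv, heq⟩ := Finset.mem_image.1 hx
    exact hTsub (heq ▸ Finset.orderEmbOfFin_mem _ h₃ v)
  have hD₂sub : D₂ ⊆ S₂ᶜ := by
    intro x hx
    rw [Finset.mem_compl]
    intro hxS
    exact (Finset.mem_compl.1 (hS₂sub hxS)) hx
  have hS₂F₂ : S₂ ∈ F₂ := by
    have hS₂mem : S₂ ∈ F₁ ∪ F₂ := by rw [hUn]; exact hS₂emb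
    rcases hS₂mem with h' | h'
    · exfalso
      have hsub2 : (↑(S₂ᶜ) : Set (Fin n)) ⊆ ZSet F₁ :=
        Set.subset_biUnion_of_mem (u := fun S : Finset (Fin n) => ((Sᶜ : Finset (Fin n)) : Set (Fin n))) h'
      have hsub3 : (↑D₂ : Set (Fin n)) ⊆ ZSet F₁ ∩ ZSet F₂ :=
        Set.subset_inter (le_trans (Finset.coe_subset.2 hD₂sub) hsub2) hD₂
      rw [hZ] at hsub3
      have hD₂e : D₂ = ∅ := Finset.coe_eq_empty.1 (Set.subset_empty_iff.1 hsub3)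
      rw [hD₂e, Finset.compl_empty] at hE₂
      exact hbπ.2 (permLE_of_univ_emb hE₂)
    · exact h'
  -- contradiction with the strong condition
  refine hSC S₁ hS₁F₁ S₂ hS₂F₂ ⟨e₁ u, ?_, e₃ u, ?_, V.card, red a.2 V, ?_, ?_⟩
  · exact Finset.mem_coe.2 (Finset.mem_compl.2 hz₁)
  · exact Finset.mem_coe.2 (Finset.mem_compl.2 hz₂)
  · rw [← himg₁]; exact hT₁emb
  · rw [← himg₂]; exact hT₂emb
lemma apLE_refl (x : AllPerm) : APle x x :=
  ⟨id, strictMono_id, fun i j => Iff.rfl⟩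

lemma strongCondition_symm {n : ℕ} {π : Equiv.Perm (Fin n)} {E₁ E₂ : Set (Finset (Fin n))}
    (h : StrongCondition π E₁ E₂) : StrongCondition π E₂ E₁ := by
  rintro S₂ h2 S₁ h1 ⟨z₂, hz2, z₁, hz1, k, τ, he2, he1⟩
  exact h S₁ h1 S₂ h2 ⟨z₁, hz1, z₂, hz2, k, τ, he1, he2⟩

/-- Suppose `σ < π`, `n − m ≥ 3`, and `[σ,π]` is strongly zero split via
the partition `E₁, E₂` of its embedding set. Then the open interval `(σ,π)` is
disconnected with components
`P_i = {λ | σ < λ < π, λ = red(π|_{Fin n ∖ D}) for some D ⊆ Z(E_i)}`. -/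
theorem stmt8 {m n : ℕ} (σ : Equiv.Perm (Fin m)) (π : Equiv.Perm (Fin n))
    (h : PermLT σ π) (h3 : 3 ≤ n - m)
    (E₁ E₂ : Set (Finset (Fin n)))
    (hpart : ZeroSplitPartition σ π E₁ E₂) (hstrong : StrongCondition π E₁ E₂) :
    let P₁ : Set AllPerm := {x | APlt ⟨m, σ⟩ x ∧ APlt x ⟨n, π⟩ ∧
      ∃ D : Finset (Fin n), (↑D : Set (Fin n)) ⊆ ZSet E₁ ∧ IsEmb π Dᶜ x.2}
    let P₂ : Set AllPerm := {x | APlt ⟨m, σ⟩ x ∧ APlt x ⟨n, π⟩ ∧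
      ∃ D : Finset (Fin n), (↑D : Set (Fin n)) ⊆ ZSet E₂ ∧ IsEmb π Dᶜ x.2}
    P₁.Nonempty ∧ P₂.Nonempty ∧
      P₁ ∪ P₂ = {x : AllPerm | APlt ⟨m, σ⟩ x ∧ APlt x ⟨n, π⟩} ∧ P₁ ∩ P₂ = ∅ ∧
      ∀ a ∈ P₁, ∀ b ∈ P₂, ¬ APle a b ∧ ¬ APle b a := by
  intro P₁ P₂
  obtain ⟨hE₁ne, hE₂ne, hUn, hdisj, hZ⟩ := hpart
  have hmn : m ≤ n := permLE_len h.1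
  have hm3 : m + 3 ≤ n := by omega
  -- generic nonemptiness argument
  have hne : ∀ (F : Set (Finset (Fin n))), (∀ S ∈ F, IsEmb π S σ) → F.Nonempty →
      ∃ x : AllPerm, APlt ⟨m, σ⟩ x ∧ APlt x ⟨n, π⟩ ∧
        ∃ D : Finset (Fin n), (↑D : Set (Fin n)) ⊆ ZSet F ∧ IsEmb π Dᶜ x.2 := by
    intro F hFemb hFne
    obtain ⟨S, hSF⟩ := hFne
    have hSemb : IsEmb π S σ := hFemb S hSF
    obtain ⟨hSc, -⟩ := id hSemb
    have hScne : (Sᶜ : Finset (Fin n)).Nonempty := by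
      rw [← Finset.card_pos, Finset.card_compl, hSc, Fintype.card_fin]
      omega
    obtain ⟨z, hz⟩ := hScne
    have hzS : z ∉ S := Finset.mem_compl.1 hz
    set T : Finset (Fin n) := insert z S with hT
    have hTc : T.card = m + 1 := by
      rw [hT, Finset.card_insert_of_notMem hzS, hSc]
    refine ⟨⟨T.card, red π T⟩, ⟨?_, ?_⟩, ⟨?_, ?_⟩, Tᶜ, ?_, ?_⟩
    · exact permLE_red_of_subset hSemb (Finset.subset_insert z S)
    · intro h'
      have hle : T.card ≤ m := permLE_len h'
      omega
    · exact (permLE_iff_exists_emb _ π).2 ⟨T, isEmb_red π T⟩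
    · intro h'
      have hle : n ≤ T.card := permLE_len h'
      omega
    · refine le_trans (Finset.coe_subset.2 (Finset.compl_subset_compl.2 (Finset.subset_insert z S))) ?_
      exact Set.subset_biUnion_of_mem
        (u := fun S : Finset (Fin n) => ((Sᶜ : Finset (Fin n)) : Set (Fin n))) hSF
    · rw [compl_compl]
      exact isEmb_red π T
  have hmemb : ∀ (F G : Set (Finset (Fin n))), F ∪ G = EmbSet σ π → ∀ S ∈ F, IsEmb π S σ := by
    intro F G hFG S hS
    have : S ∈ EmbSet σ π := by rw [← hFG]; exact Or.inl hS
    exact this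
  have hUn' : E₂ ∪ E₁ = EmbSet σ π := by rw [Set.union_comm]; exact hUn
  have hZ' : ZSet E₂ ∩ ZSet E₁ = ∅ := by rw [Set.inter_comm]; exact hZ
  have hincomp : ∀ a ∈ P₁, ∀ b ∈ P₂, ¬ APle a b ∧ ¬ APle b a := by
    intro a ha b hb
    obtain ⟨ha1, ha2, D₁, hD₁, hED₁⟩ := ha
    obtain ⟨hb1, hb2, D₂, hD₂, hED₂⟩ := hb
    constructor
    · intro hab
      exact main_incomp σ π E₁ E₂ hUn hZ hstrong a b ha1 ha2 hb2 D₁ hD₁ hED₁ D₂ hD₂ hED₂ hab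
    · intro hba
      exact main_incomp σ π E₂ E₁ hUn' hZ' (strongCondition_symm hstrong) b a hb1 hb2 ha2
        D₂ hD₂ hED₂ D₁ hD₁ hED₁ hba
  refine ⟨hne E₁ (hmemb E₁ E₂ hUn) hE₁ne, hne E₂ (hmemb E₂ E₁ hUn') hE₂ne, ?_, ?_, hincomp⟩
  · ext x
    simp only [Set.mem_union, Set.mem_setOf_eq, P₁, P₂]
    constructor
    · rintro (⟨h1, h2, -⟩ | ⟨h1, h2, -⟩) <;> exact ⟨h1, h2⟩
    · rintro ⟨hσx, hxπ⟩
      obtain ⟨T, hT⟩ := (permLE_iff_exists_emb x.2 π).1 hxπ.1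
      obtain ⟨hTc, -⟩ := id hT
      have hpat : ∀ i j, x.2 i < x.2 j ↔
          π (T.orderEmbOfFin hTc i) < π (T.orderEmbOfFin hTc j) :=
        (isEmb_iff_of_map π T x.2 hTc _ (T.orderEmbOfFin hTc).strictMono
          (fun y => Finset.orderEmbOfFin_mem T hTc y)).1 hT
      obtain ⟨U, hU⟩ := (permLE_iff_exists_emb σ x.2).1 hσx.1
      have hSemb : IsEmb π (U.image (T.orderEmbOfFin hTc)) σ :=
        isEmb_map π x.2 _ (T.orderEmbOfFin hTc).strictMono hpat U σ hU
      have hSsub : U.image (T.orderEmbOfFin hTc) ⊆ T := by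
        intro y hy
        obtain ⟨v, hv, heq⟩ := Finset.mem_image.1 hy
        exact heq ▸ Finset.orderEmbOfFin_mem T hTc v
      have hTcc : IsEmb π Tᶜᶜ x.2 := by rw [compl_compl]; exact hT
      have hTsubS : (↑(Tᶜ) : Set (Fin n)) ⊆
          ((↑((U.image (T.orderEmbOfFin hTc))ᶜ) : Set (Fin n))) :=
        Finset.coe_subset.2 (Finset.compl_subset_compl.2 hSsub)
      have hSmem : U.image (T.orderEmbOfFin hTc) ∈ E₁ ∪ E₂ := by rw [hUn]; exact hSemb
      rcases hSmem with h' | h'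
      · left
        refine ⟨hσx, hxπ, Tᶜ, le_trans hTsubS ?_, hTcc⟩
        exact Set.subset_biUnion_of_mem
          (u := fun S : Finset (Fin n) => ((Sᶜ : Finset (Fin n)) : Set (Fin n))) h'
      · right
        refine ⟨hσx, hxπ, Tᶜ, le_trans hTsubS ?_, hTcc⟩
        exact Set.subset_biUnion_of_mem
          (u := fun S : Finset (Fin n) => ((Sᶜ : Finset (Fin n)) : Set (Fin n))) h'
  · rw [Set.eq_empty_iff_forall_notMem]
    rintro x ⟨hx1, hx2⟩
    exact ((hincomp x hx1 x hx2).1) (apLE_refl x)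
end

section
/- Let σ < π in the consecutive permutation pattern order, with σ of length m and π of length n. Let W*(σ,π) be the poset of all intervals of consecutive positions J ⊊ {1,…,n} (proper subsets) such that σ ≤ red(π|_J) in the consecutive order, ordered by inclusion, and let Ŵ*(σ,π) be the bounded poset obtained by adjoining a new minimum 0̂ and a new maximum 1̂. Then μ(0̂,1̂) in Ŵ*(σ,π) equals 1 if σ is order-isomorphic to x(π) and σ ≰ i(π) in the consecutive order, and equals 0 otherwise. -/
attribute [local instance] Classical.propDecidable

/-- The block of `m` consecutive entries of `π` starting at position `i` (0-indexed)
is order-isomorphic to `σ`. -/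
def OccAt {m n : ℕ} (σ : Equiv.Perm (Fin m)) (π : Equiv.Perm (Fin n)) (i : ℕ) : Prop :=
  ∃ h : i + m ≤ n, ∀ j k : Fin m, σ j < σ k ↔
    π ⟨i + j.1, lt_of_lt_of_le (Nat.add_lt_add_left j.2 i) h⟩ <
      π ⟨i + k.1, lt_of_lt_of_le (Nat.add_lt_add_left k.2 i) h⟩

/-- Consecutive pattern containment: some block of consecutive entries of `π` is
order-isomorphic to `σ`. -/
def ConsLE {m n : ℕ} (σ : Equiv.Perm (Fin m)) (π : Equiv.Perm (Fin n)) : Prop :=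
  ∃ i : ℕ, OccAt σ π i

/-- Strict consecutive pattern containment. -/
def ConsLT {m n : ℕ} (σ : Equiv.Perm (Fin m)) (π : Equiv.Perm (Fin n)) : Prop :=
  ConsLE σ π ∧ ¬ ConsLE π σ

/-- `σ` is a prefix of `π`. -/
def IsPrefixC {m n : ℕ} (σ : Equiv.Perm (Fin m)) (π : Equiv.Perm (Fin n)) : Prop :=
  OccAt σ π 0

/-- `σ` is a suffix of `π`. -/
def IsSuffixC {m n : ℕ} (σ : Equiv.Perm (Fin m)) (π : Equiv.Perm (Fin n)) : Prop :=
  OccAt σ π (n - m)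

/-- `σ` is a bifix of `π`: both a prefix and a suffix. -/
def IsBifixC {m n : ℕ} (σ : Equiv.Perm (Fin m)) (π : Equiv.Perm (Fin n)) : Prop :=
  IsPrefixC σ π ∧ IsSuffixC σ π

/-- `xp` is the exterior `x(π)` of `π`: the longest bifix of `π` of length strictly
less than `n`. -/
def IsExterior {l n : ℕ} (π : Equiv.Perm (Fin n)) (xp : Equiv.Perm (Fin l)) : Prop :=
  IsBifixC xp π ∧ l < n ∧
    ∀ (b : ℕ) (τ : Equiv.Perm (Fin b)), IsBifixC τ π → b < n → b ≤ l

/-- `ip` is the interior `i(π)` of `π`: the permutation order-isomorphic to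
`π₂…π_{n−1}`. -/
def IsInterior {n : ℕ} (π : Equiv.Perm (Fin n)) (ip : Equiv.Perm (Fin (n - 2))) : Prop :=
  ∀ j k : Fin (n - 2), ip j < ip k ↔
    π ⟨j.1 + 1, by have := j.2; omega⟩ < π ⟨k.1 + 1, by have := k.2; omega⟩

/-- A permutation is monotone if it is order-isomorphic to `12…k` or to `k…21`. -/
def IsMonotoneP {m : ℕ} (σ : Equiv.Perm (Fin m)) : Prop :=
  StrictMono σ ∨ StrictAnti σ

/-- Two permutations are order-isomorphic (the same pattern). -/
def PermIsoC {a b : ℕ} (σ : Equiv.Perm (Fin a)) (τ : Equiv.Perm (Fin b)) : Prop :=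
  ∃ h : a = b, ∀ i j : Fin a,
    σ i < σ j ↔ τ (Fin.cast h i) < τ (Fin.cast h j)

/-- A set of positions consists of consecutive positions (is order-convex). -/
def IsIvl {n : ℕ} (s : Finset (Fin n)) : Prop :=
  ∀ x ∈ s, ∀ y ∈ s, ∀ z : Fin n, x ≤ z → z ≤ y → z ∈ s

/-- `σ` is consecutively contained in the pattern of `π` on the interval of positions
`J`: some occurrence window of `σ` in `π` is contained in `J`. -/
def ConsLERed {m n : ℕ} (σ : Equiv.Perm (Fin m)) (π : Equiv.Perm (Fin n))
    (J : Finset (Fin n)) : Prop :=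
  ∃ i : ℕ, OccAt σ π i ∧ ∀ (t : ℕ) (h : t < n), i ≤ t → t < i + m → (⟨t, h⟩ : Fin n) ∈ J

/-- The poset `W*(σ,π)` of proper intervals of consecutive positions `J ⊊ {1,…,n}`
with `σ ≤ red(π|_J)` in the consecutive order, ordered by inclusion. -/
abbrev WstarP {m n : ℕ} (π : Equiv.Perm (Fin n)) (σ : Equiv.Perm (Fin m)) :=
  {J : Finset (Fin n) // J ≠ Finset.univ ∧ IsIvl J ∧ ConsLERed σ π J}

/-! ### Auxiliary abstract Möbius lemmas -/

open Finset IncidenceAlgebra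

set_option linter.unusedSectionVars false

section Abstract
variable {α : Type*} [PartialOrder α] [Fintype α] [DecidableEq (Bd α)]
  [LocallyFiniteOrder (Bd α)]

/-- Embedding of α into Bd α. -/
def emb (x : α) : Bd α := ((x : WithTop α) : Bd α)

lemma emb_le_emb {x y : α} : emb x ≤ emb y ↔ x ≤ y := by
  simp [emb]

lemma bot_ne_emb (x : α) : (⊥ : Bd α) ≠ emb x := by simp [emb]

lemma emb_ne_top (x : α) : emb x ≠ (⊤ : Bd α) := by
  simp only [emb, ne_eq]
  intro hc
  rw [show ((⊤ : Bd α)) = ((⊤ : WithTop α) : Bd α) from rfl] at hc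
  exact (WithTop.coe_ne_top) (WithBot.coe_injective hc)

lemma top_not_le_emb (x : α) : ¬ (⊤ : Bd α) ≤ emb x := fun hc =>
  emb_ne_top x (le_antisymm le_top hc)

lemma sum_Icc_bot (b : Bd α) (hb : b ≠ ⊥) :
    ∑ x ∈ Icc (⊥ : Bd α) b, mu ℤ (⊥ : Bd α) x = 0 := by
  rw [sum_Icc_mu_right]
  simp [Ne.symm hb]

lemma mem_Icc_bot {b x : Bd α} : x ∈ Icc (⊥ : Bd α) b ↔ x ≤ b := by
  simp [Finset.mem_Icc]

lemma key_split (L R : α) (hLR : ∀ x : α, x ≤ L ∨ x ≤ R) :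
    mu ℤ (⊥ : Bd α) ⊤ =
      ∑ x ∈ Icc (⊥ : Bd α) (emb L) ∩ Icc (⊥ : Bd α) (emb R), mu ℤ (⊥ : Bd α) x := by
  have h0 : (0:ℤ) = ∑ x ∈ Icc (⊥ : Bd α) ⊤, mu ℤ (⊥ : Bd α) x :=
    (sum_Icc_bot ⊤ (by simp)).symm
  have hsplit : Icc (⊥ : Bd α) ⊤ = insert ⊤ (Icc (⊥ : Bd α) (emb L) ∪ Icc (⊥ : Bd α) (emb R)) := by
    ext x
    simp only [mem_insert, Finset.mem_union, mem_Icc_bot]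
    constructor
    · intro _
      induction x using WithBot.recBotCoe with
      | bot => exact Or.inr (Or.inl bot_le)
      | coe y =>
        induction y using WithTop.recTopCoe with
        | top => exact Or.inl rfl
        | coe z =>
          rcases hLR z with h | h
          · exact Or.inr (Or.inl (emb_le_emb.2 h))
          · exact Or.inr (Or.inr (emb_le_emb.2 h))
    · intro _; exact le_top
  have hnot : (⊤ : Bd α) ∉ Icc (⊥ : Bd α) (emb L) ∪ Icc (⊥ : Bd α) (emb R) := by
    simp only [Finset.mem_union, mem_Icc_bot]
    rintro (h | h)
    · exact top_not_le_emb L h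
    · exact top_not_le_emb R h
  rw [hsplit, Finset.sum_insert hnot] at h0
  have hui : (∑ x ∈ Icc (⊥ : Bd α) (emb L) ∪ Icc (⊥ : Bd α) (emb R), mu ℤ (⊥ : Bd α) x)
      + ∑ x ∈ Icc (⊥ : Bd α) (emb L) ∩ Icc (⊥ : Bd α) (emb R), mu ℤ (⊥ : Bd α) x
      = (∑ x ∈ Icc (⊥ : Bd α) (emb L), mu ℤ (⊥ : Bd α) x)
        + ∑ x ∈ Icc (⊥ : Bd α) (emb R), mu ℤ (⊥ : Bd α) x :=
    Finset.sum_union_inter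
  have hL := sum_Icc_bot (emb L) (Ne.symm (bot_ne_emb L))
  have hR := sum_Icc_bot (emb R) (Ne.symm (bot_ne_emb R))
  have : ∑ x ∈ Icc (⊥ : Bd α) (emb L) ∪ Icc (⊥ : Bd α) (emb R), mu ℤ (⊥ : Bd α) x
      = - ∑ x ∈ Icc (⊥ : Bd α) (emb L) ∩ Icc (⊥ : Bd α) (emb R), mu ℤ (⊥ : Bd α) x := by
    rw [hL, hR] at hui; linarith
  rw [this] at h0
  linarith

lemma aux_zero (L R M : α) (hLR : ∀ x : α, x ≤ L ∨ x ≤ R)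
    (hM : ∀ x : α, x ≤ L ∧ x ≤ R ↔ x ≤ M) :
    mu ℤ (⊥ : Bd α) ⊤ = 0 := by
  rw [key_split L R hLR]
  have : Icc (⊥ : Bd α) (emb L) ∩ Icc (⊥ : Bd α) (emb R) = Icc (⊥ : Bd α) (emb M) := by
    ext x
    simp only [Finset.mem_inter, mem_Icc_bot]
    constructor
    · rintro ⟨h1, h2⟩
      induction x using WithBot.recBotCoe with
      | bot => exact bot_le
      | coe y =>
        induction y using WithTop.recTopCoe with
        | top => exact absurd h1 (top_not_le_emb L)
        | coe z =>
          exact emb_le_emb.2 ((hM z).1 ⟨emb_le_emb.1 h1, emb_le_emb.1 h2⟩)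
    · intro hx
      induction x using WithBot.recBotCoe with
      | bot => exact ⟨bot_le, bot_le⟩
      | coe y =>
        induction y using WithTop.recTopCoe with
        | top => exact absurd hx (top_not_le_emb M)
        | coe z =>
          have := (hM z).2 (emb_le_emb.1 hx)
          exact ⟨emb_le_emb.2 this.1, emb_le_emb.2 this.2⟩
  rw [this, sum_Icc_bot (emb M) (Ne.symm (bot_ne_emb M))]

lemma aux_one (L R : α) (hLR : ∀ x : α, x ≤ L ∨ x ≤ R)
    (hd : ∀ x : α, ¬ (x ≤ L ∧ x ≤ R)) :
    mu ℤ (⊥ : Bd α) ⊤ = 1 := by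
  rw [key_split L R hLR]
  have : Icc (⊥ : Bd α) (emb L) ∩ Icc (⊥ : Bd α) (emb R) = {(⊥ : Bd α)} := by
    ext x
    simp only [Finset.mem_inter, mem_Icc_bot, Finset.mem_singleton]
    constructor
    · rintro ⟨h1, h2⟩
      induction x using WithBot.recBotCoe with
      | bot => rfl
      | coe y =>
        induction y using WithTop.recTopCoe with
        | top => exact absurd h1 (top_not_le_emb L)
        | coe z => exact absurd ⟨emb_le_emb.1 h1, emb_le_emb.1 h2⟩ (hd z)
    · rintro rfl; exact ⟨bot_le, bot_le⟩
  rw [this, Finset.sum_singleton]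
  simp

end Abstract

lemma mobHat_eq_zero {α : Type*} [PartialOrder α] [Fintype α] (L R M : α)
    (hLR : ∀ x : α, x ≤ L ∨ x ≤ R) (hM : ∀ x : α, x ≤ L ∧ x ≤ R ↔ x ≤ M) :
    mobHat α = 0 := by
  letI := Classical.decEq (Bd α)
  letI : @DecidableRel (Bd α) (Bd α) (· ≤ ·) := Classical.decRel _
  letI : @DecidableRel (Bd α) (Bd α) (· < ·) := Classical.decRel _
  letI : LocallyFiniteOrder (Bd α) := Fintype.toLocallyFiniteOrder
  show IncidenceAlgebra.mu ℤ (⊥ : Bd α) ⊤ = 0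
  exact aux_zero L R M hLR hM

lemma mobHat_eq_one {α : Type*} [PartialOrder α] [Fintype α] (L R : α)
    (hLR : ∀ x : α, x ≤ L ∨ x ≤ R) (hd : ∀ x : α, ¬ (x ≤ L ∧ x ≤ R)) :
    mobHat α = 1 := by
  letI := Classical.decEq (Bd α)
  letI : @DecidableRel (Bd α) (Bd α) (· ≤ ·) := Classical.decRel _
  letI : @DecidableRel (Bd α) (Bd α) (· < ·) := Classical.decRel _
  letI : LocallyFiniteOrder (Bd α) := Fintype.toLocallyFiniteOrder
  show IncidenceAlgebra.mu ℤ (⊥ : Bd α) ⊤ = 1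
  exact aux_one L R hLR hd

/-! ### Combinatorial helpers -/

/-- The interval of positions `[a,b]` in `Fin n`. -/
def Kset (n a b : ℕ) : Finset (Fin n) :=
  Finset.univ.filter (fun x => a ≤ x.1 ∧ x.1 ≤ b)

lemma mem_Kset {n a b : ℕ} {x : Fin n} : x ∈ Kset n a b ↔ a ≤ x.1 ∧ x.1 ≤ b := by
  simp [Kset]

lemma isIvl_Kset {n a b : ℕ} : IsIvl (Kset n a b) := by
  intro x hx y hy z hxz hzy
  rw [mem_Kset] at hx hy ⊢
  rw [Fin.le_def] at hxz hzy
  omega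

lemma Kset_ne_univ {n a b : ℕ} (p : ℕ) (hp : p < n) (hpn : ¬ (a ≤ p ∧ p ≤ b)) :
    Kset n a b ≠ Finset.univ := by
  intro hc
  have := Finset.eq_univ_iff_forall.mp hc ⟨p, hp⟩
  rw [mem_Kset] at this
  exact hpn this

lemma consLERed_K {m n : ℕ} {σ : Equiv.Perm (Fin m)} {π : Equiv.Perm (Fin n)}
    {i a b : ℕ} (hocc : OccAt σ π i) (hai : a ≤ i) (hib : i + m ≤ b + 1) :
    ConsLERed σ π (Kset n a b) :=
  ⟨i, hocc, fun t ht h1 h2 => mem_Kset.2 (show a ≤ t ∧ t ≤ b by omega)⟩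

lemma plt_congr {n : ℕ} (π : Equiv.Perm (Fin n)) {a b a' b' : ℕ}
    (ha : a < n) (hb : b < n) (ha' : a' < n) (hb' : b' < n)
    (h1 : a = a') (h2 : b = b') :
    (π ⟨a, ha⟩ < π ⟨b, hb⟩) ↔ (π ⟨a', ha'⟩ < π ⟨b', hb'⟩) := by
  subst h1; subst h2; rfl

lemma occAt_transfer {a b n : ℕ} {σ : Equiv.Perm (Fin a)} {τ : Equiv.Perm (Fin b)}
    {π : Equiv.Perm (Fin n)} (hiso : PermIsoC σ τ) {i : ℕ} (hocc : OccAt τ π i) :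
    OccAt σ π i := by
  obtain ⟨hab, hpat⟩ := hiso
  subst hab
  obtain ⟨hle, hp2⟩ := hocc
  exact ⟨hle, fun j k => (hpat j k).trans (hp2 (Fin.cast rfl j) (Fin.cast rfl k))⟩

/-- For `σ < π` in the consecutive order, the Möbius function
`μ(0̂,1̂)` of the bounded poset `Ŵ*(σ,π)` equals `1` if `σ` is order-isomorphic to
`x(π)` and `σ ≰ i(π)`, and equals `0` otherwise. -/
theorem stmt11 {m n l : ℕ} (σ : Equiv.Perm (Fin m)) (π : Equiv.Perm (Fin n))
    (xp : Equiv.Perm (Fin l)) (ip : Equiv.Perm (Fin (n - 2)))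
    (hx : IsExterior π xp) (hi : IsInterior π ip)
    (h : ConsLT σ π) :
    (PermIsoC σ xp ∧ ¬ ConsLE σ ip → mobHat (WstarP π σ) = 1) ∧
    (¬ (PermIsoC σ xp ∧ ¬ ConsLE σ ip) → mobHat (WstarP π σ) = 0) := by
  obtain ⟨hσπ, hnπσ⟩ := h
  have hmn : m < n := by
    obtain ⟨i0, hle, hpat⟩ := hσπ
    rcases Nat.lt_or_ge m n with h' | h'
    · exact h'
    · exfalso
      have hmn' : m = n := by omega
      have hi00 : i0 = 0 := by omega
      subst hi00
      subst hmn'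
      apply hnπσ
      refine ⟨0, by omega, fun j k => ?_⟩
      have h1 := hpat ⟨0 + j.1, by omega⟩ ⟨0 + k.1, by omega⟩
      simp only [Nat.zero_add, Fin.eta] at h1 ⊢
      exact h1.symm
  have hn1 : 1 ≤ n := by omega
  have hlast : n - 1 < n := by omega
  have h0n : 0 < n := by omega
  have hA2 : ∀ i, OccAt σ π i → 1 ≤ i → i + m ≤ n - 1 → ConsLE σ ip := by
    rintro i ⟨hle, hp⟩ h1 h2
    refine ⟨i - 1, by omega, fun j k => ?_⟩
    refine (hp j k).trans
      (Iff.trans ?_ (hi ⟨i - 1 + j.1, by omega⟩ ⟨i - 1 + k.1, by omega⟩).symm)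
    exact plt_congr π (a := i + j.1) (b := i + k.1) (a' := i - 1 + j.1 + 1)
      (b' := i - 1 + k.1 + 1) (by omega) (by omega) (by omega) (by omega) (by omega) (by omega)
  have hA1 : 2 ≤ n → ConsLE σ ip → ∃ i, OccAt σ π i ∧ 1 ≤ i ∧ i + m ≤ n - 1 := by
    rintro hn2 ⟨i, hle, hp⟩
    refine ⟨i + 1, ⟨by omega, fun j k => ?_⟩, by omega, by omega⟩
    refine (hp j k).trans
      (Iff.trans (hi ⟨i + j.1, by omega⟩ ⟨i + k.1, by omega⟩) ?_)
    exact plt_congr π (a := i + j.1 + 1) (b := i + k.1 + 1) (a' := i + 1 + j.1)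
      (b' := i + 1 + k.1) (by omega) (by omega) (by omega) (by omega) (by omega) (by omega)
  have hsub : ∀ J : Finset (Fin n), J ≠ Finset.univ → IsIvl J →
      ((⟨n - 1, hlast⟩ : Fin n) ∉ J) ∨ ((⟨0, h0n⟩ : Fin n) ∉ J) := by
    intro J hne hivl
    by_contra hc
    push_neg at hc
    apply hne
    rw [Finset.eq_univ_iff_forall]
    intro z
    exact hivl _ hc.2 _ hc.1 z (Fin.le_def.2 (show 0 ≤ z.1 by omega))
      (Fin.le_def.2 (show z.1 ≤ n - 1 by have := z.2; omega))
  have hJL : ∀ J : Finset (Fin n), ((⟨n - 1, hlast⟩ : Fin n) ∉ J) → J ⊆ Kset n 0 (n - 2) := by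
    intro J hnl x hx'
    have hxl : x.1 < n := x.2
    rcases Nat.lt_or_ge x.1 (n - 1) with h' | h'
    · exact mem_Kset.2 (by omega)
    · exfalso
      have : x = (⟨n - 1, hlast⟩ : Fin n) := Fin.ext (show x.1 = n - 1 by omega)
      rw [this] at hx'
      exact hnl hx'
  have hJR : ∀ J : Finset (Fin n), ((⟨0, h0n⟩ : Fin n) ∉ J) → J ⊆ Kset n 1 (n - 1) := by
    intro J hnl x hx'
    have hxl : x.1 < n := x.2
    rcases Nat.eq_zero_or_pos x.1 with h' | h'
    · exfalso
      have : x = (⟨0, h0n⟩ : Fin n) := Fin.ext (show x.1 = 0 by omega)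
      rw [this] at hx'
      exact hnl hx'
    · exact mem_Kset.2 (by omega)
  have hle_iff : ∀ J K : WstarP π σ, J ≤ K ↔ J.1 ⊆ K.1 := by
    intro J K
    rw [← Subtype.coe_le_coe, Finset.le_iff_subset]
  rcases Nat.lt_or_ge n 2 with hn2 | hn2
  · -- n = 1, m = 0
    have hn1' : n = 1 := by omega
    have hm0 : m = 0 := by omega
    have hipc : ConsLE σ ip := ⟨0, by omega, fun j k => absurd j.2 (by omega)⟩
    refine ⟨fun hc => absurd hipc hc.2, fun _ => ?_⟩
    have pfE : (∅ : Finset (Fin n)) ≠ Finset.univ ∧ IsIvl (∅ : Finset (Fin n)) ∧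
        ConsLERed σ π (∅ : Finset (Fin n)) := by
      refine ⟨?_, ?_, ?_⟩
      · intro hc
        have : (⟨0, h0n⟩ : Fin n) ∈ (∅ : Finset (Fin n)) := hc ▸ Finset.mem_univ _
        exact absurd this (Finset.notMem_empty _)
      · intro x hx
        exact absurd hx (Finset.notMem_empty _)
      · obtain ⟨i0, hocc⟩ := hσπ
        exact ⟨i0, hocc, fun t ht h1 h2 => by exfalso; omega⟩
    apply mobHat_eq_zero ⟨∅, pfE⟩ ⟨∅, pfE⟩ ⟨∅, pfE⟩
    · intro J
      left
      rw [hle_iff]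
      intro x hx'
      exfalso
      apply J.2.1
      rw [Finset.eq_univ_iff_forall]
      intro y
      have : y = x := Fin.ext (by have := y.2; have := x.2; omega)
      rw [this]
      exact hx'
    · exact fun J => ⟨fun hh => hh.1, fun hh => ⟨hh, hh⟩⟩
  · -- main case n ≥ 2
    have hLRgen : ∀ J : WstarP π σ, J.1 ⊆ Kset n 0 (n - 2) ∨ J.1 ⊆ Kset n 1 (n - 1) := by
      intro J
      rcases hsub J.1 J.2.1 J.2.2.1 with h' | h'
      · exact Or.inl (hJL J.1 h')
      · exact Or.inr (hJR J.1 h')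
    by_cases hcond : PermIsoC σ xp ∧ ¬ ConsLE σ ip
    · refine ⟨fun _ => ?_, fun hn => absurd hcond hn⟩
      obtain ⟨hiso, hnip⟩ := hcond
      have hm1 : 1 ≤ m := by
        by_contra hm0'
        exact hnip ⟨0, by omega, fun j k => absurd j.2 (by omega)⟩
      have hpre : OccAt σ π 0 := occAt_transfer hiso hx.1.1
      have hsufl : OccAt σ π (n - l) := occAt_transfer hiso hx.1.2
      have hml : m = l := hiso.1
      have hsuf : OccAt σ π (n - m) := by
        have heq : n - m = n - l := by omega
        rw [heq]
        exact hsufl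
      have pfL : Kset n 0 (n - 2) ≠ Finset.univ ∧ IsIvl (Kset n 0 (n - 2)) ∧
          ConsLERed σ π (Kset n 0 (n - 2)) :=
        ⟨Kset_ne_univ (n - 1) hlast (by omega), isIvl_Kset,
          consLERed_K hpre (by omega) (by omega)⟩
      have pfR : Kset n 1 (n - 1) ≠ Finset.univ ∧ IsIvl (Kset n 1 (n - 1)) ∧
          ConsLERed σ π (Kset n 1 (n - 1)) :=
        ⟨Kset_ne_univ 0 h0n (by omega), isIvl_Kset,
          consLERed_K hsuf (by omega) (by omega)⟩
      apply mobHat_eq_one ⟨_, pfL⟩ ⟨_, pfR⟩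
      · intro J
        rcases hLRgen J with h' | h'
        · exact Or.inl ((hle_iff J _).2 h')
        · exact Or.inr ((hle_iff J _).2 h')
      · rintro J ⟨hjl, hjr⟩
        rw [hle_iff] at hjl hjr
        obtain ⟨i, hocc, hwin⟩ := J.2.2.2
        obtain ⟨hle, hp⟩ := hocc
        have hiJ : (⟨i, by omega⟩ : Fin n) ∈ J.1 := hwin i (by omega) (le_refl i) (by omega)
        have hiJ2 : (⟨i + m - 1, by omega⟩ : Fin n) ∈ J.1 :=
          hwin (i + m - 1) (by omega) (by omega) (by omega)
        have h1' := mem_Kset.1 (hjr hiJ)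
        have h2' := mem_Kset.1 (hjl hiJ2)
        have h1 : 1 ≤ i := h1'.1
        have h2 : i + m - 1 ≤ n - 2 := h2'.2
        exact hnip (hA2 i ⟨hle, hp⟩ h1 (by omega))
    · refine ⟨fun hc => absurd hc hcond, fun _ => ?_⟩
      by_cases hip : ConsLE σ ip
      · obtain ⟨i₁, hocc₁, hi11, hi12⟩ := hA1 hn2 hip
        have pfL : Kset n 0 (n - 2) ≠ Finset.univ ∧ IsIvl (Kset n 0 (n - 2)) ∧
            ConsLERed σ π (Kset n 0 (n - 2)) :=
          ⟨Kset_ne_univ (n - 1) hlast (by omega), isIvl_Kset,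
            consLERed_K hocc₁ (by omega) (by omega)⟩
        have pfR : Kset n 1 (n - 1) ≠ Finset.univ ∧ IsIvl (Kset n 1 (n - 1)) ∧
            ConsLERed σ π (Kset n 1 (n - 1)) :=
          ⟨Kset_ne_univ 0 h0n (by omega), isIvl_Kset,
            consLERed_K hocc₁ (by omega) (by omega)⟩
        have pfM : Kset n 1 (n - 2) ≠ Finset.univ ∧ IsIvl (Kset n 1 (n - 2)) ∧
            ConsLERed σ π (Kset n 1 (n - 2)) :=
          ⟨Kset_ne_univ 0 h0n (by omega), isIvl_Kset,
            consLERed_K hocc₁ (by omega) (by omega)⟩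
        apply mobHat_eq_zero ⟨_, pfL⟩ ⟨_, pfR⟩ ⟨_, pfM⟩
        · intro J
          rcases hLRgen J with h' | h'
          · exact Or.inl ((hle_iff J _).2 h')
          · exact Or.inr ((hle_iff J _).2 h')
        · intro J
          simp only [hle_iff]
          constructor
          · rintro ⟨h1, h2⟩ x hx'
            have ha := mem_Kset.1 (h1 hx')
            have hb := mem_Kset.1 (h2 hx')
            exact mem_Kset.2 (by omega)
          · intro h1
            constructor <;> intro x hx' <;>
              · have ha := mem_Kset.1 (h1 hx')
                have hxn : x.1 < n := x.2
                exact mem_Kset.2 (by omega)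
      · have hniso : ¬ PermIsoC σ xp := fun hiso => hcond ⟨hiso, hip⟩
        have hnoint : ∀ i, OccAt σ π i → i = 0 ∨ i + m = n := by
          intro i hoi
          by_contra hc
          push_neg at hc
          obtain ⟨hle, hp⟩ := hoi
          exact hip (hA2 i ⟨hle, hp⟩ (by omega) (by omega))
        have hm1 : 1 ≤ m := by
          by_contra h'
          have hocc1 : OccAt σ π 1 := ⟨by omega, fun j k => absurd j.2 (by omega)⟩
          rcases hnoint 1 hocc1 with h'' | h'' <;> omega
        by_cases hpre : OccAt σ π 0
        · by_cases hsuf : OccAt σ π (n - m)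
          · exfalso
            have hbm : m ≤ l := hx.2.2 m σ ⟨hpre, hsuf⟩ hmn
            rcases Nat.eq_or_lt_of_le hbm with heq | hlt
            · apply hniso
              obtain ⟨hpl, hpp⟩ := hpre
              obtain ⟨hxl, hxpp⟩ := hx.1.1
              exact ⟨heq, fun a b =>
                (hpp a b).trans ((hxpp (Fin.cast heq a) (Fin.cast heq b)).symm)⟩
            · have hln : l < n := hx.2.1
              obtain ⟨hsl, hsp⟩ := hsuf
              obtain ⟨hxpl, hxpp⟩ := hx.1.1
              obtain ⟨hxsl, hxsp⟩ := hx.1.2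
              have hocc2 : OccAt σ π (l - m) := by
                refine ⟨by omega, fun j k => ?_⟩
                calc σ j < σ k
                    ↔ π ⟨n - m + j.1, by omega⟩ < π ⟨n - m + k.1, by omega⟩ := hsp j k
                  _ ↔ π ⟨n - l + (l - m + j.1), by omega⟩ <
                        π ⟨n - l + (l - m + k.1), by omega⟩ :=
                      plt_congr π (by omega) (by omega) (by omega) (by omega)
                        (by omega) (by omega)
                  _ ↔ xp ⟨l - m + j.1, by omega⟩ < xp ⟨l - m + k.1, by omega⟩ :=
                      (hxsp ⟨l - m + j.1, by omega⟩ ⟨l - m + k.1, by omega⟩).symm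
                  _ ↔ π ⟨0 + (l - m + j.1), by omega⟩ < π ⟨0 + (l - m + k.1), by omega⟩ :=
                      hxpp ⟨l - m + j.1, by omega⟩ ⟨l - m + k.1, by omega⟩
                  _ ↔ π ⟨l - m + j.1, by omega⟩ < π ⟨l - m + k.1, by omega⟩ :=
                      plt_congr π (by omega) (by omega) (by omega) (by omega)
                        (by omega) (by omega)
              exact hip (hA2 (l - m) hocc2 (by omega) (by omega))
          · -- prefix only
            have pfL : Kset n 0 (n - 2) ≠ Finset.univ ∧ IsIvl (Kset n 0 (n - 2)) ∧
                ConsLERed σ π (Kset n 0 (n - 2)) :=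
              ⟨Kset_ne_univ (n - 1) hlast (by omega), isIvl_Kset,
                consLERed_K hpre (by omega) (by omega)⟩
            apply mobHat_eq_zero ⟨_, pfL⟩ ⟨_, pfL⟩ ⟨_, pfL⟩
            · intro J
              left
              rw [hle_iff]
              obtain ⟨i, hocc, hwin⟩ := J.2.2.2
              have hi0 : i = 0 := by
                rcases hnoint i hocc with h' | h'
                · exact h'
                · exfalso
                  apply hsuf
                  obtain ⟨hle, hp⟩ := hocc
                  have heq : n - m = i := by omega
                  rw [heq]
                  exact ⟨hle, hp⟩
              subst hi0
              have h0J : (⟨0, h0n⟩ : Fin n) ∈ J.1 := hwin 0 h0n (le_refl 0) (by omega)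
              have hlst : (⟨n - 1, hlast⟩ : Fin n) ∉ J.1 := by
                rcases hsub J.1 J.2.1 J.2.2.1 with h' | h'
                · exact h'
                · exact absurd h0J h'
              exact hJL J.1 hlst
            · exact fun J => ⟨fun hh => hh.1, fun hh => ⟨hh, hh⟩⟩
        · by_cases hsuf : OccAt σ π (n - m)
          · -- suffix only
            have pfR : Kset n 1 (n - 1) ≠ Finset.univ ∧ IsIvl (Kset n 1 (n - 1)) ∧
                ConsLERed σ π (Kset n 1 (n - 1)) :=
              ⟨Kset_ne_univ 0 h0n (by omega), isIvl_Kset,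
                consLERed_K hsuf (by omega) (by omega)⟩
            apply mobHat_eq_zero ⟨_, pfR⟩ ⟨_, pfR⟩ ⟨_, pfR⟩
            · intro J
              left
              rw [hle_iff]
              obtain ⟨i, hocc, hwin⟩ := J.2.2.2
              have hi0 : i = n - m := by
                rcases hnoint i hocc with h' | h'
                · exact absurd (h' ▸ hocc) hpre
                · obtain ⟨hle, hp⟩ := hocc
                  omega
              subst hi0
              have hlJ : (⟨n - 1, hlast⟩ : Fin n) ∈ J.1 :=
                hwin (n - 1) hlast (by omega) (by omega)
              have h0nJ : (⟨0, h0n⟩ : Fin n) ∉ J.1 := by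
                rcases hsub J.1 J.2.1 J.2.2.1 with h' | h'
                · exact absurd hlJ h'
                · exact h'
              exact hJR J.1 h0nJ
            · exact fun J => ⟨fun hh => hh.1, fun hh => ⟨hh, hh⟩⟩
          · exfalso
            obtain ⟨i0, hocc⟩ := hσπ
            rcases hnoint i0 hocc with h' | h'
            · exact hpre (h' ▸ hocc)
            · apply hsuf
              obtain ⟨hle, hp⟩ := hocc
              have heq : n - m = i0 := by omega
              rw [heq]
              exact ⟨hle, hp⟩
end

section
/- Let P and Q be finite bounded pure posets, f : P → Q a poset fibration, and ≺ a linear order on P. For q ∈ Q let r(q) be the ≺-least element of f^{-1}(q), and define the linear order ≺_f on Q by a ≺_f b iff r(a) ≺ r(b). Suppose that for every q ∈ Q: (i) f^{-1}({x ∈ Q : x < q}) = {p ∈ P : p < r(q)}, and (ii) whenever f^{-1}({x ∈ Q : x > q}) is nonempty, ≺ induces a recursive atom ordering on the bounded poset obtained by adjoining a new minimum to it. If ≺ induces a recursive atom ordering on P, then ≺_f induces a recursive atom ordering on Q. -/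
attribute [local instance] Classical.propDecidable

/-- A finite poset is pure if all of its maximal chains have the same size. -/
def IsPure (α : Type*) [PartialOrder α] : Prop :=
  ∀ s t : Set α, IsMaxChain (· ≤ ·) s → IsMaxChain (· ≤ ·) t → s.ncard = t.ncard

/-- The linear order `prec` induces a recursive atom ordering: ordering the atoms of
every rooted interval `[α,1̂]_c` by `prec` satisfies the two conditions (R1) and (R2)
of a recursive atom ordering.  For `prec`-induced orderings the ordering assigned to a
rooted interval depends only on the top element of the root chain, so (R1) becomes: for
every `β ⋖ t` (`β` the penultimate element of the root chain) and atoms `a, b` of `t`,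
if `a` covers some atom `γ` of `β` with `γ ≺ t` and `b` does not, then `a ≺ b`;
and (R2) becomes: for atoms `a ≺ b` of `t` and any `y` above both, there are an atom
`k ≺ b` of `t` and `z` covering `b` with `k < z ≤ y`. -/
def InducesRAO {α : Type*} [PartialOrder α] (prec : α → α → Prop) : Prop :=
  (∀ β t : α, β ⋖ t → ∀ a b : α, t ⋖ a → t ⋖ b →
    (∃ γ, β ⋖ γ ∧ prec γ t ∧ γ ⋖ a) → ¬ (∃ γ, β ⋖ γ ∧ prec γ t ∧ γ ⋖ b) → prec a b) ∧
  (∀ t a b : α, t ⋖ a → t ⋖ b → prec a b → ∀ y : α, a ≤ y → b ≤ y →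
    ∃ k, t ⋖ k ∧ prec k b ∧ ∃ z, b ⋖ z ∧ z ≤ y ∧ k < z)

/-- Extend a relation on `α` to `WithBot α`, letting the new bottom element precede
every other element. -/
def liftWithBot {α : Type*} (prec : α → α → Prop) (a b : WithBot α) : Prop :=
  (a = ⊥ ∧ b ≠ ⊥) ∨ ∃ x y : α, a = x ∧ b = y ∧ prec x y


section Aux

variable {α : Type*} [PartialOrder α] [Fintype α]

lemma my_height_ne_top (x : α) : Order.height x ≠ ⊤ := by
  have h : Order.height x ≤ (Fintype.card α : ℕ∞) := by
    apply Order.height_le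
    intro p _
    have h1 : p.length + 1 ≤ Fintype.card α := by
      simpa using Fintype.card_le_of_injective p.toFun p.strictMono.injective
    have h2 : p.length ≤ Fintype.card α := by omega
    exact_mod_cast h2
  exact ne_top_of_le_ne_top (WithTop.coe_ne_top) h

lemma my_coheight_ne_top (x : α) : Order.coheight x ≠ ⊤ :=
  my_height_ne_top (α := αᵒᵈ) (OrderDual.toDual x)

lemma my_height_lt {x y : α} (h : x < y) : Order.height x < Order.height y :=
  Order.height_strictMono h ((my_height_ne_top x).lt_top)

lemma chain_card_le_height_aux (n : ℕ) :
    ∀ (s : Set α) (x : α), s.ncard ≤ n → IsChain (· ≤ ·) s → x ∈ s →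
      (∀ y ∈ s, y ≤ x) → (s.ncard : ℕ∞) ≤ Order.height x + 1 := by
  induction n with
  | zero =>
    intro s x hle _ hx _
    have := (Set.ncard_pos (Set.toFinite s)).mpr ⟨x, hx⟩
    omega
  | succ n ih =>
    intro s x hle hch hx htop
    rcases Set.eq_empty_or_nonempty (s \ {x}) with h | ⟨m0, hm0⟩
    · have hs : s = {x} := by
        apply Set.Subset.antisymm
        · intro y hy
          by_contra hne
          exact Set.eq_empty_iff_forall_notMem.mp h y ⟨hy, hne⟩
        · simpa using hx
      rw [hs, Set.ncard_singleton]
      exact le_add_self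
    · obtain ⟨m, _, hm⟩ := Set.Finite.exists_le_maximal (Set.toFinite _) hm0
      have hms : m ∈ s := hm.prop.1
      have hmx : m ≠ x := hm.prop.2
      have hmtop : ∀ y ∈ s \ {x}, y ≤ m := by
        intro y hy
        rcases eq_or_ne y m with rfl | hne
        · exact le_rfl
        · rcases hch hy.1 hms hne with h1 | h1
          · exact h1
          · exact hm.2 hy h1
      have hmlt : m < x := lt_of_le_of_ne (htop m hms) hmx
      have hcard : (s \ {x}).ncard + 1 = s.ncard :=
        Set.ncard_diff_singleton_add_one hx (Set.toFinite s)
      have hcount : (s \ {x}).ncard ≤ n := by omega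
      have h1 := ih (s \ {x}) m hcount (hch.mono Set.diff_subset) hm.prop hmtop
      have h2 : Order.height m + 1 ≤ Order.height x :=
        (ENat.add_one_le_iff (my_height_ne_top m)).mpr (my_height_lt hmlt)
      calc (s.ncard : ℕ∞) = ((s \ {x}).ncard : ℕ∞) + 1 := by
            rw [← hcard]; push_cast; ring
        _ ≤ (Order.height m + 1) + 1 := add_le_add_left h1 1
        _ ≤ Order.height x + 1 := add_le_add_left h2 1

lemma chain_card_le_height' (s : Set α) (x : α) (hch : IsChain (· ≤ ·) s) (hx : x ∈ s)
    (htop : ∀ y ∈ s, y ≤ x) : (s.ncard : ℕ∞) ≤ Order.height x + 1 :=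
  chain_card_le_height_aux s.ncard s x le_rfl hch hx htop

lemma chain_card_le_height_strict (s : Set α) (x : α) (hch : IsChain (· ≤ ·) s)
    (hlt : ∀ y ∈ s, y < x) : (s.ncard : ℕ∞) ≤ Order.height x := by
  have hxs : x ∉ s := fun h => lt_irrefl x (hlt x h)
  have hch' : IsChain (· ≤ ·) (insert x s) :=
    hch.insert (fun y hy _ => Or.inr (hlt y hy).le)
  have h1 := chain_card_le_height' (insert x s) x hch' (Set.mem_insert _ _)
      (fun y hy => by rcases hy with rfl | hy; exacts [le_rfl, (hlt y hy).le])
  rw [Set.ncard_insert_of_notMem hxs (Set.toFinite _)] at h1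
  have h2 : (s.ncard : ℕ∞) + 1 ≤ Order.height x + 1 := by exact_mod_cast h1
  have h3 : (s.ncard : ℕ∞) < Order.height x + 1 :=
    (ENat.add_one_le_iff (ENat.coe_ne_top _)).mp h2
  exact (ENat.lt_add_one_iff (my_height_ne_top x)).mp h3

lemma exists_chain_height (x : α) : ∃ s : Set α, IsChain (· ≤ ·) s ∧ x ∈ s ∧
    (∀ y ∈ s, y ≤ x) ∧ (s.ncard : ℕ∞) = Order.height x + 1 := by
  obtain ⟨n, hn⟩ : ∃ n : ℕ, Order.height x = n :=
    ⟨(Order.height x).toNat, (ENat.coe_toNat_eq_self.mpr (my_height_ne_top x)).symm⟩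
  obtain ⟨p, hlast, hlen⟩ := Order.exists_series_of_height_eq_coe x hn
  refine ⟨Set.range p.toFun, ?_, ⟨Fin.last _, hlast⟩, ?_, ?_⟩
  · rintro u ⟨i, rfl⟩ v ⟨j, rfl⟩ _
    rcases le_total i j with h | h
    · exact Or.inl (p.monotone h)
    · exact Or.inr (p.monotone h)
  · rintro y ⟨i, rfl⟩
    calc p.toFun i ≤ p.last := p.monotone (Fin.le_last i)
      _ = x := hlast
  · have hc : (Set.range p.toFun).ncard = p.length + 1 := by
      rw [← Nat.card_coe_set_eq, Nat.card_range_of_injective p.strictMono.injective,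
        Nat.card_eq_fintype_card, Fintype.card_fin]
    rw [hc, hlen, hn]
    push_cast
    ring

lemma chain_card_le_coheight' (s : Set α) (x : α) (hch : IsChain (· ≤ ·) s) (hx : x ∈ s)
    (hbot : ∀ y ∈ s, x ≤ y) : (s.ncard : ℕ∞) ≤ Order.coheight x + 1 := by
  haveI : Fintype αᵒᵈ := ‹Fintype α›
  have hch' : IsChain (· ≤ ·) (OrderDual.ofDual ⁻¹' s : Set αᵒᵈ) := by
    intro u hu v hv hne
    exact (hch hu hv (fun h => hne (OrderDual.ofDual.injective h))).symm
  exact chain_card_le_height' (α := αᵒᵈ) (OrderDual.ofDual ⁻¹' s) (OrderDual.toDual x)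
    hch' hx (fun y hy => hbot (OrderDual.ofDual y) hy)

lemma exists_chain_coheight (x : α) : ∃ s : Set α, IsChain (· ≤ ·) s ∧ x ∈ s ∧
    (∀ y ∈ s, x ≤ y) ∧ (s.ncard : ℕ∞) = Order.coheight x + 1 := by
  haveI : Fintype αᵒᵈ := ‹Fintype α›
  obtain ⟨s, hch, hx, hle, hcard⟩ := exists_chain_height (α := αᵒᵈ) (OrderDual.toDual x)
  refine ⟨OrderDual.toDual ⁻¹' s, ?_, hx, fun y hy => hle (OrderDual.toDual y) hy, hcard⟩
  intro u hu v hv hne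
  exact (hch hu hv (fun h => hne (OrderDual.toDual.injective h))).symm

lemma pure_graded (hpure : IsPure α) {a b : α} (hab : a ⋖ b) :
    Order.height b = Order.height a + 1 := by
  obtain ⟨A, hAch, haA, hAle, hAcard⟩ := exists_chain_height a
  obtain ⟨B, hBch, hbB, hBge, hBcard⟩ := exists_chain_coheight b
  obtain ⟨C, hCch, hbC, hCle, hCcard⟩ := exists_chain_height b
  obtain ⟨ka, hka⟩ : ∃ n : ℕ, Order.height a = n :=
    ⟨_, (ENat.coe_toNat_eq_self.mpr (my_height_ne_top a)).symm⟩
  obtain ⟨kb, hkb⟩ : ∃ n : ℕ, Order.height b = n :=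
    ⟨_, (ENat.coe_toNat_eq_self.mpr (my_height_ne_top b)).symm⟩
  obtain ⟨kc, hkc⟩ : ∃ n : ℕ, Order.coheight b = n :=
    ⟨_, (ENat.coe_toNat_eq_self.mpr (my_coheight_ne_top b)).symm⟩
  rw [hka] at hAcard; rw [hkc] at hBcard; rw [hkb] at hCcard
  have nA : A.ncard = ka + 1 := by exact_mod_cast hAcard
  have nB : B.ncard = kc + 1 := by exact_mod_cast hBcard
  have nC : C.ncard = kb + 1 := by exact_mod_cast hCcard
  -- the maximal chain through a and b
  have hTch : IsChain (· ≤ ·) (A ∪ B) := by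
    intro u hu v hv hne
    rcases hu with hu | hu <;> rcases hv with hv | hv
    · exact hAch hu hv hne
    · exact Or.inl ((hAle u hu).trans (hab.lt.le.trans (hBge v hv)))
    · exact Or.inr ((hAle v hv).trans (hab.lt.le.trans (hBge u hu)))
    · exact hBch hu hv hne
  obtain ⟨Ma, hMa, hTMa⟩ := hTch.exists_maxChain
  have haMa : a ∈ Ma := hTMa (Or.inl haA)
  have hbMa : b ∈ Ma := hTMa (Or.inr hbB)
  have hMasplit : Ma = (Ma ∩ Set.Iic a) ∪ (Ma ∩ Set.Ici b) := by
    apply Set.Subset.antisymm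
    · intro m hm
      rcases eq_or_ne m a with rfl | hma
      · exact Or.inl ⟨hm, le_rfl⟩
      rcases eq_or_ne m b with rfl | hmb
      · exact Or.inr ⟨hm, le_rfl⟩
      rcases hMa.isChain hm haMa hma with h | h
      · exact Or.inl ⟨hm, h⟩
      · rcases hMa.isChain hm hbMa hmb with h2 | h2
        · exact absurd (lt_of_le_of_ne h2 hmb) (hab.2 (lt_of_le_of_ne h (Ne.symm hma)))
        · exact Or.inr ⟨hm, h2⟩
    · rintro m (⟨hm, _⟩ | ⟨hm, _⟩) <;> exact hm
  have hdisj : Disjoint (Ma ∩ Set.Iic a) (Ma ∩ Set.Ici b) := by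
    rw [Set.disjoint_left]
    rintro m ⟨_, h1⟩ ⟨_, h2⟩
    exact lt_irrefl _ (lt_of_lt_of_le hab.lt (h2.trans h1))
  have e1 : Ma.ncard = (Ma ∩ Set.Iic a).ncard + (Ma ∩ Set.Ici b).ncard := by
    conv_lhs => rw [hMasplit]
    exact Set.ncard_union_eq hdisj (Set.toFinite _) (Set.toFinite _)
  have b1 : ((Ma ∩ Set.Iic a).ncard : ℕ∞) ≤ Order.height a + 1 :=
    chain_card_le_height' _ a (hMa.isChain.mono Set.inter_subset_left) ⟨haMa, le_rfl⟩
      (fun y hy => hy.2)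
  have b2 : ((Ma ∩ Set.Ici b).ncard : ℕ∞) ≤ Order.coheight b + 1 :=
    chain_card_le_coheight' _ b (hMa.isChain.mono Set.inter_subset_left) ⟨hbMa, le_rfl⟩
      (fun y hy => hy.2)
  rw [hka] at b1; rw [hkc] at b2
  have i1 : (Ma ∩ Set.Iic a).ncard ≤ ka + 1 := by exact_mod_cast b1
  have i2 : (Ma ∩ Set.Ici b).ncard ≤ kc + 1 := by exact_mod_cast b2
  have hTdisj : Disjoint A B := by
    rw [Set.disjoint_left]
    intro u hu hv
    exact lt_irrefl _ (lt_of_lt_of_le hab.lt ((hBge u hv).trans (hAle u hu)))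
  have hTcard : (A ∪ B).ncard = A.ncard + B.ncard :=
    Set.ncard_union_eq hTdisj (Set.toFinite _) (Set.toFinite _)
  have l1 : (A ∪ B).ncard ≤ Ma.ncard := Set.ncard_le_ncard hTMa (Set.toFinite _)
  -- the maximal chain through b only
  have hSch : IsChain (· ≤ ·) (C ∪ B) := by
    intro u hu v hv hne
    rcases hu with hu | hu <;> rcases hv with hv | hv
    · exact hCch hu hv hne
    · exact Or.inl ((hCle u hu).trans (hBge v hv))
    · exact Or.inr ((hCle v hv).trans (hBge u hu))
    · exact hBch hu hv hne
  obtain ⟨Mb, hMb, hSMb⟩ := hSch.exists_maxChain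
  have hbMb : b ∈ Mb := hSMb (Or.inl hbC)
  have hMbsplit : Mb = (Mb ∩ Set.Iio b) ∪ (Mb ∩ Set.Ici b) := by
    apply Set.Subset.antisymm
    · intro m hm
      rcases eq_or_ne m b with rfl | hmb
      · exact Or.inr ⟨hm, le_rfl⟩
      rcases hMb.isChain hm hbMb hmb with h | h
      · exact Or.inl ⟨hm, lt_of_le_of_ne h hmb⟩
      · exact Or.inr ⟨hm, h⟩
    · rintro m (⟨hm, _⟩ | ⟨hm, _⟩) <;> exact hm
  have hdisj2 : Disjoint (Mb ∩ Set.Iio b) (Mb ∩ Set.Ici b) := by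
    rw [Set.disjoint_left]
    rintro m ⟨_, h1⟩ ⟨_, h2⟩
    exact lt_irrefl _ (lt_of_lt_of_le h1 h2)
  have e2 : Mb.ncard = (Mb ∩ Set.Iio b).ncard + (Mb ∩ Set.Ici b).ncard := by
    conv_lhs => rw [hMbsplit]
    exact Set.ncard_union_eq hdisj2 (Set.toFinite _) (Set.toFinite _)
  have b3 : ((Mb ∩ Set.Iio b).ncard : ℕ∞) ≤ Order.height b :=
    chain_card_le_height_strict _ b (hMb.isChain.mono Set.inter_subset_left)
      (fun y hy => hy.2)
  have b4 : ((Mb ∩ Set.Ici b).ncard : ℕ∞) ≤ Order.coheight b + 1 :=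
    chain_card_le_coheight' _ b (hMb.isChain.mono Set.inter_subset_left) ⟨hbMb, le_rfl⟩
      (fun y hy => hy.2)
  rw [hkb] at b3; rw [hkc] at b4
  have i3 : (Mb ∩ Set.Iio b).ncard ≤ kb := by exact_mod_cast b3
  have i4 : (Mb ∩ Set.Ici b).ncard ≤ kc + 1 := by exact_mod_cast b4
  have hCB : C ∩ B = {b} := by
    apply Set.Subset.antisymm
    · rintro u ⟨h1, h2⟩
      exact le_antisymm (hCle u h1) (hBge u h2)
    · rintro u rfl
      exact ⟨hbC, hbB⟩
  have ncS : (C ∪ B).ncard + 1 = C.ncard + B.ncard := by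
    have h := Set.ncard_union_add_ncard_inter C B (Set.toFinite _) (Set.toFinite _)
    rwa [hCB, Set.ncard_singleton] at h
  have l2 : (C ∪ B).ncard ≤ Mb.ncard := Set.ncard_le_ncard hSMb (Set.toFinite _)
  have peq : Ma.ncard = Mb.ncard := hpure Ma Mb hMa hMb
  rw [hTcard, nA, nB] at l1
  have hfin : kb = ka + 1 := by omega
  rw [hkb, hka, hfin]
  push_cast
  ring

end Aux

/-- Let `f : P → Q` be a poset fibration between finite bounded pure
posets and `≺` a linear order on `P`.  For `q ∈ Q` let `r q` be the `≺`-least element of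
`f⁻¹(q)`, and let `≺_f` be the linear order on `Q` given by `a ≺_f b ↔ r a ≺ r b`.
Suppose for every `q ∈ Q`: (i) `f⁻¹(Q_{<q}) = P_{<r q}`, and (ii) whenever
`f⁻¹(Q_{>q})` is nonempty, `≺` induces a recursive atom ordering on the bounded poset
obtained by adjoining a new minimum to it.  If `≺` induces a recursive atom ordering on
`P`, then `≺_f` induces a recursive atom ordering on `Q`. -/
theorem stmt12 {P Q : Type*} [PartialOrder P] [PartialOrder Q]
    [BoundedOrder P] [BoundedOrder Q] [Fintype P] [Fintype Q]
    (hP : IsPure P) (hQ : IsPure Q)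
    (f : P → Q) (hsurj : Function.Surjective f) (hmono : Monotone f)
    (hrank : ∀ p : P, Order.height (f p) = Order.height p)
    (prec : P → P → Prop) (hlin : IsStrictTotalOrder P prec)
    (r : Q → P) (hr_mem : ∀ q, f (r q) = q)
    (hr_least : ∀ q p, f p = q → p ≠ r q → prec (r q) p)
    (hi : ∀ q : Q, {p : P | f p < q} = {p : P | p < r q})
    (hii : ∀ q : Q, Nonempty {p : P // q < f p} →
      InducesRAO (liftWithBot fun a b : {p : P // q < f p} => prec a.1 b.1))
    (hRAO : InducesRAO prec) :
    InducesRAO (fun a b : Q => prec (r a) (r b)) := by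
  haveI := hlin
  have hiq : ∀ (q : Q) (p : P), f p < q ↔ p < r q := by
    intro q p
    have := Set.ext_iff.mp (hi q) p
    simpa using this
  have key : ∀ q q' : Q, q < q' ↔ r q < r q' := by
    intro q q'
    rw [← hiq q' (r q), hr_mem]
  have rle : ∀ q q' : Q, q ≤ q' → r q ≤ r q' := by
    intro q q' h
    rcases h.lt_or_eq with h | rfl
    · exact ((key _ _).mp h).le
    · exact le_rfl
  have hrh : ∀ q : Q, Order.height (r q) = Order.height q := by
    intro q
    conv_rhs => rw [← hr_mem q]
    rw [hrank]
  have grP : ∀ a b : P, a ⋖ b → Order.height b = Order.height a + 1 :=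
    fun a b h => pure_graded hP h
  have covQP : ∀ q q' : Q, q ⋖ q' → r q ⋖ r q' := by
    intro q q' h
    refine ⟨(key q q').mp h.lt, ?_⟩
    intro p h1 h2
    have hfp : f p < q' := (hiq q' p).mpr h2
    have hqfp : q ≤ f p := by
      conv_lhs => rw [← hr_mem q]
      exact hmono h1.le
    rcases hqfp.lt_or_eq with hlt | heq
    · exact h.2 hlt hfp
    · have e1 : Order.height p = Order.height q := by rw [← hrank p, ← heq]
      have e2 : Order.height (r q) < Order.height p := my_height_lt h1
      rw [hrh q] at e2
      exact absurd e1.symm (ne_of_lt e2)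
  have covHt : ∀ u v : Q, u ≤ v → Order.height v = Order.height u + 1 → u ⋖ v := by
    intro u v huv hh
    have hself : Order.height u < Order.height u + 1 :=
      (ENat.lt_add_one_iff (my_height_ne_top u)).mpr le_rfl
    have hne : u ≠ v := by
      rintro rfl
      exact absurd hh (ne_of_lt hself)
    refine ⟨huv.lt_of_ne hne, ?_⟩
    intro x h1 h2
    have l1 : Order.height u < Order.height x := my_height_lt h1
    have l2 : Order.height x < Order.height v := my_height_lt h2
    rw [hh] at l2
    exact absurd l1 (not_lt.mpr ((ENat.lt_add_one_iff (my_height_ne_top u)).mp l2))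
  have pushCovUp : ∀ (q : Q) (p' : P), r q ⋖ p' → q ⋖ f p' := by
    intro q p' hc
    have h1 : Order.height (f p') = Order.height q + 1 := by
      rw [hrank p', grP _ _ hc, hrh q]
    have h2 : q ≤ f p' := by
      conv_lhs => rw [← hr_mem q]
      exact hmono hc.le
    exact covHt _ _ h2 h1
  have pushCovDown : ∀ (p' : P) (q : Q), p' ⋖ r q → f p' ⋖ q := by
    intro p' q hc
    have h1 : Order.height q = Order.height (f p') + 1 := by
      rw [← hrh q, grP _ _ hc, hrank p']
    have h2 : f p' ≤ q := by
      conv_rhs => rw [← hr_mem q]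
      exact hmono hc.le
    exact covHt _ _ h2 h1
  have rprec' : ∀ (p p₂ : P), prec p p₂ → prec (r (f p)) p₂ := by
    intro p p₂ h
    by_cases he : p = r (f p)
    · rwa [← he]
    · exact _root_.trans (hr_least (f p) p rfl he) h
  have fstrict : ∀ p₁ p₂ : P, p₁ < p₂ → f p₁ < f p₂ := by
    intro p₁ p₂ h
    refine (hmono h.le).lt_of_ne ?_
    intro e
    have hlt := my_height_lt h
    have e2 : Order.height p₁ = Order.height p₂ := by
      rw [← hrank p₁, ← hrank p₂, e]
    exact absurd e2 (ne_of_lt hlt)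
  constructor
  · rintro β t hβt a b hta htb ⟨γ, hβγ, hγt, hγa⟩ hnb
    refine hRAO.1 (r β) (r t) (covQP _ _ hβt) (r a) (r b) (covQP _ _ hta) (covQP _ _ htb)
      ⟨r γ, covQP _ _ hβγ, hγt, covQP _ _ hγa⟩ ?_
    rintro ⟨γ', h1, h2, h3⟩
    exact hnb ⟨f γ', pushCovUp β γ' h1, rprec' γ' (r t) h2, pushCovDown γ' b h3⟩
  · rintro t a b hta htb hab y hay hby
    obtain ⟨k', hk1, hk2, z', hz1, hz2, hz3⟩ :=
      hRAO.2 (r t) (r a) (r b) (covQP _ _ hta) (covQP _ _ htb) hab (r y)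
        (rle _ _ hay) (rle _ _ hby)
    refine ⟨f k', pushCovUp t k' hk1, rprec' k' (r b) hk2, f z', pushCovUp b z' hz1, ?_,
      fstrict _ _ hz3⟩
    calc f z' ≤ f (r y) := hmono hz2
      _ = y := hr_mem y
end

section
/- For words u < w in subword order, μ(u,w) = μ(0̂,1̂ in Â(u,w)) + Σ_{λ : u < λ < w} μ(u,λ) · μ(0̂,1̂ in Â*(λ,w)), where the sum is over all words λ with u < λ < w. -/
attribute [local instance] Classical.propDecidable

lemma mob_self {α : Type*} [PartialOrder α] [Fintype α] (a : α) : mob a a = 1 := by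
  letI := Classical.decEq α
  letI : @DecidableRel α α (· ≤ ·) := Classical.decRel _
  letI : @DecidableRel α α (· < ·) := Classical.decRel _
  letI : LocallyFiniteOrder α := Fintype.toLocallyFiniteOrder
  exact IncidenceAlgebra.mu_self (𝕜 := ℤ) a

lemma mob_sum_left_ne {α : Type*} [PartialOrder α] [Fintype α] (a b : α) (hab : a ≠ b) :
    ∑ x ∈ Finset.univ.filter (fun x => a ≤ x ∧ x ≤ b), mob x b = 0 := by
  letI := Classical.decEq α
  letI : @DecidableRel α α (· ≤ ·) := Classical.decRel _
  letI : @DecidableRel α α (· < ·) := Classical.decRel _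
  letI : LocallyFiniteOrder α := Fintype.toLocallyFiniteOrder
  have key := IncidenceAlgebra.sum_Icc_mu_left (𝕜 := ℤ) a b
  rw [if_neg hab] at key
  have hIcc : Finset.Icc a b = Finset.univ.filter (fun x => a ≤ x ∧ x ≤ b) := by
    ext x; simp [Finset.mem_Icc]
  rw [hIcc] at key
  exact key

lemma sum_Bd {σ : Type*} [Fintype σ] {M : Type*} [AddCommMonoid M] (f : Bd σ → M) :
    ∑ y : Bd σ, f y = f ⊥ + (f ⊤ + ∑ T : σ, f (↑(↑T : WithTop σ))) := by
  have h1 : ∑ y : Bd σ, f y = f ⊥ + ∑ y : WithTop σ, f ↑y := Fintype.sum_option f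
  have h2 : ∑ y : WithTop σ, f ↑y = f ⊤ + ∑ T : σ, f (↑(↑T : WithTop σ)) :=
    Fintype.sum_option (fun y : WithTop σ => f ↑y)
  rw [h1, h2]

lemma neg_one_pow_sub (m r : ℕ) (h : r ≤ m) : (-1 : ℤ)^(m - r) = (-1)^m * (-1)^r := by
  have : m = (m - r) + r := by omega
  have h2 : ((-1 : ℤ)^r) * ((-1:ℤ)^r) = 1 := by
    rw [← pow_add]; exact Even.neg_one_pow ⟨r, rfl⟩
  calc (-1 : ℤ)^(m-r) = (-1)^(m-r) * ((-1)^r * (-1)^r) := by rw [h2, mul_one]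
    _ = ((-1)^(m-r) * (-1)^r) * (-1)^r := by ring
    _ = (-1)^m * (-1)^r := by rw [← pow_add, ← this]

lemma alt_sum {n : ℕ} (A : Finset (Fin n)) (hA : A ≠ Finset.univ) :
    ∑ B : Finset (Fin n), (if A ⊆ B then ((-1:ℤ)^(n - B.card)) else 0) = 0 := by
  classical
  rw [← Finset.sum_filter]
  have hre : ∑ B ∈ Finset.univ.filter (fun B => A ⊆ B), ((-1:ℤ)^(n - B.card))
      = ∑ R ∈ Aᶜ.powerset, ((-1:ℤ)^(n - (A ∪ R).card)) := by
    refine Finset.sum_nbij' (fun B => B \ A) (fun R => A ∪ R) ?_ ?_ ?_ ?_ ?_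
    · intro B hB
      simp only [Finset.mem_filter] at hB
      simp only [Finset.mem_powerset]
      intro x hx
      simp only [Finset.mem_sdiff] at hx
      simp [Finset.mem_compl, hx.2]
    · intro R hR
      simp only [Finset.mem_powerset] at hR
      simp only [Finset.mem_filter, Finset.mem_univ, true_and]
      exact Finset.subset_union_left
    · intro B hB
      simp only [Finset.mem_filter] at hB
      exact Finset.union_sdiff_of_subset hB.2
    · intro R hR
      simp only [Finset.mem_powerset] at hR
      apply Finset.union_sdiff_cancel_left
      rw [Finset.disjoint_right]
      intro x hx
      exact Finset.mem_compl.mp (hR hx)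
    · intro B hB
      simp only [Finset.mem_filter] at hB
      rw [Finset.union_sdiff_of_subset hB.2]
  rw [hre]
  have hcard : ∀ R ∈ Aᶜ.powerset, n - (A ∪ R).card = Aᶜ.card - R.card ∧ R.card ≤ Aᶜ.card := by
    intro R hR
    simp only [Finset.mem_powerset] at hR
    have hdisj : Disjoint A R := by
      rw [Finset.disjoint_right]; intro x hx; exact (Finset.mem_compl.mp (hR hx))
    have h1 : (A ∪ R).card = A.card + R.card := Finset.card_union_of_disjoint hdisj
    have h2 : Aᶜ.card = n - A.card := by
      rw [Finset.card_compl]; simp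
    have h3 : A.card ≤ n := by
      simpa using Finset.card_le_card (Finset.subset_univ A)
    have h4 : R.card ≤ Aᶜ.card := Finset.card_le_card hR
    constructor
    · rw [h1, h2]; omega
    · exact h4
  have : ∑ R ∈ Aᶜ.powerset, ((-1:ℤ)^(n - (A ∪ R).card))
      = (-1)^(Aᶜ.card) * ∑ R ∈ Aᶜ.powerset, ((-1:ℤ)^R.card) := by
    rw [Finset.mul_sum]
    refine Finset.sum_congr rfl fun R hR => ?_
    obtain ⟨h1, h2⟩ := hcard R hR
    rw [h1, neg_one_pow_sub _ _ h2]
  rw [this, Finset.sum_powerset_neg_one_pow_card, if_neg, mul_zero]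
  intro hc
  apply hA
  have := congrArg (fun s => sᶜ) hc
  simpa using this

section Upset

variable {n : ℕ} {P : Finset (Fin n) → Prop} [DecidablePred P]

lemma mob_coe_top
    (hup : ∀ ⦃S T : Finset (Fin n)⦄, P S → S ⊆ T → T ≠ Finset.univ → P T)
    (hnu : ∀ S, P S → S ≠ Finset.univ) (S : {S // P S}) :
    mob (↑(↑S : WithTop {S // P S}) : Bd {S // P S}) ⊤ = (-1 : ℤ)^(n - S.1.card) := by
  classical
  suffices H : ∀ k (S : {S // P S}), n - S.1.card = k →
      mob (↑(↑S : WithTop {S // P S}) : Bd {S // P S}) ⊤ = (-1 : ℤ)^(n - S.1.card) from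
    H _ S rfl
  intro k
  induction k using Nat.strong_induction_on with
  | _ k IH =>
  intro S hk
  have hSu : S.1 ≠ Finset.univ := hnu _ S.2
  have hScard : S.1.card < n := by
    have h1 : S.1 ⊂ Finset.univ := Finset.ssubset_univ_iff.mpr hSu
    simpa using Finset.card_lt_card h1
  have hne : (↑(↑S : WithTop {S // P S}) : Bd {S // P S}) ≠ ⊤ :=
    fun h => WithTop.coe_ne_top (WithBot.coe_injective h)
  have h0 := mob_sum_left_ne (↑(↑S : WithTop {S // P S}) : Bd {S // P S}) ⊤ hne
  rw [Finset.sum_filter] at h0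
  rw [sum_Bd] at h0
  rw [if_neg (fun h => WithBot.not_coe_le_bot _ h.1), if_pos ⟨le_top, le_refl _⟩,
    mob_self, zero_add] at h0
  have hcond : ∀ T : {S // P S},
      ((↑(↑S : WithTop {S // P S}) : Bd {S // P S}) ≤ ↑(↑T : WithTop {S // P S})
        ∧ (↑(↑T : WithTop {S // P S}) : Bd {S // P S}) ≤ ⊤) ↔ S.1 ⊆ T.1 := by
    intro T
    simp only [le_top, and_true, WithBot.coe_le_coe, WithTop.coe_le_coe]
    rfl
  simp only [hcond] at h0
  have hsplit := Finset.sum_erase_add Finset.univ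
    (fun T : {S // P S} => (if S.1 ⊆ T.1
      then mob (↑(↑T : WithTop {S // P S}) : Bd {S // P S}) ⊤ else 0))
    (Finset.mem_univ S)
  rw [← hsplit] at h0
  beta_reduce at h0
  rw [if_pos (Finset.Subset.refl _)] at h0
  -- rewrite the erased sum using the induction hypothesis
  have h2 : ∑ T ∈ Finset.univ.erase S, (if S.1 ⊆ T.1
        then mob (↑(↑T : WithTop {S // P S}) : Bd {S // P S}) ⊤ else 0)
      = ∑ T ∈ Finset.univ.erase S, (if S.1 ⊆ T.1 then ((-1:ℤ)^(n - T.1.card)) else 0) := by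
    refine Finset.sum_congr rfl fun T hT => ?_
    by_cases hST : S.1 ⊆ T.1
    · rw [if_pos hST, if_pos hST]
      have hTS : T ≠ S := Finset.ne_of_mem_erase hT
      have hss : S.1 ⊂ T.1 := ⟨hST, fun h => hTS (Subtype.ext (Finset.Subset.antisymm h hST))⟩
      have hcc : S.1.card < T.1.card := Finset.card_lt_card hss
      have hTn : T.1.card ≤ n := by simpa using Finset.card_le_univ T.1
      exact IH (n - T.1.card) (by omega) T rfl
    · rw [if_neg hST, if_neg hST]
  rw [h2] at h0
  -- compute the alternating sum over strict supersets
  have h3 : (∑ T ∈ Finset.univ.erase S, (if S.1 ⊆ T.1 then ((-1:ℤ)^(n - T.1.card)) else 0))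
        + ((-1:ℤ)^(n - S.1.card))
      = ∑ T : {S // P S}, (if S.1 ⊆ T.1 then ((-1:ℤ)^(n - T.1.card)) else 0) := by
    have := Finset.sum_erase_add Finset.univ
      (fun T : {S // P S} => (if S.1 ⊆ T.1 then ((-1:ℤ)^(n - T.1.card)) else 0))
      (Finset.mem_univ S)
    beta_reduce at this
    rw [if_pos (Finset.Subset.refl _)] at this
    exact this
  have h4 : ∑ T : {S // P S}, (if S.1 ⊆ T.1 then ((-1:ℤ)^(n - T.1.card)) else 0)
      = ∑ B ∈ Finset.univ.filter P, (if S.1 ⊆ B then ((-1:ℤ)^(n - B.card)) else 0) :=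
    (Finset.sum_subtype (Finset.univ.filter P) (fun x => by simp)
      (fun B => (if S.1 ⊆ B then ((-1:ℤ)^(n - B.card)) else 0))).symm
  have h5 : ∑ B ∈ Finset.univ.filter P, (if S.1 ⊆ B then ((-1:ℤ)^(n - B.card)) else 0)
      = ∑ B : Finset (Fin n),
          (if S.1 ⊆ B ∧ B ≠ Finset.univ then ((-1:ℤ)^(n - B.card)) else 0) := by
    rw [Finset.sum_filter]
    refine Finset.sum_congr rfl fun B _ => ?_
    by_cases hPB : P B
    · rw [if_pos hPB]
      by_cases hSB : S.1 ⊆ B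
      · rw [if_pos hSB, if_pos ⟨hSB, hnu _ hPB⟩]
      · rw [if_neg hSB, if_neg (fun h => hSB h.1)]
    · rw [if_neg hPB]
      by_cases hSB : S.1 ⊆ B ∧ B ≠ Finset.univ
      · exact absurd (hup S.2 hSB.1 hSB.2) hPB
      · rw [if_neg hSB]
  have h6 : ∑ B : Finset (Fin n),
        (if S.1 ⊆ B ∧ B ≠ Finset.univ then ((-1:ℤ)^(n - B.card)) else 0)
      = (∑ B : Finset (Fin n), (if S.1 ⊆ B then ((-1:ℤ)^(n - B.card)) else 0)) - 1 := by
    have huniv : ∀ B : Finset (Fin n), B ∈ Finset.univ →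
        (if S.1 ⊆ B ∧ B ≠ Finset.univ then ((-1:ℤ)^(n - B.card)) else 0)
          + (if B = Finset.univ then ((-1:ℤ)^(n - B.card)) else 0)
        = (if S.1 ⊆ B then ((-1:ℤ)^(n - B.card)) else 0) := by
      intro B _
      by_cases hB : B = Finset.univ
      · subst hB
        rw [if_pos rfl, if_neg (fun h => h.2 rfl), if_pos (Finset.subset_univ _), zero_add]
      · rw [if_neg hB, add_zero]
        by_cases hSB : S.1 ⊆ B
        · rw [if_pos ⟨hSB, hB⟩, if_pos hSB]
        · rw [if_neg (fun h => hSB h.1), if_neg hSB]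
    have hone : ∑ B : Finset (Fin n), (if B = Finset.univ then ((-1:ℤ)^(n - B.card)) else 0)
        = 1 := by
      rw [Finset.sum_ite_eq' Finset.univ Finset.univ
        (fun B : Finset (Fin n) => ((-1:ℤ)^(n - B.card)))]
      simp
    have hadd := Finset.sum_add_distrib (s := (Finset.univ : Finset (Finset (Fin n))))
      (f := fun B => (if S.1 ⊆ B ∧ B ≠ Finset.univ then ((-1:ℤ)^(n - B.card)) else 0))
      (g := fun B => (if B = Finset.univ then ((-1:ℤ)^(n - B.card)) else 0))
    have hcongr := Finset.sum_congr rfl huniv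
    rw [hcongr] at hadd
    linarith [hadd, hone]
  have h7 := alt_sum S.1 hSu
  linarith [h0, h3, h4, h5, h6, h7]

lemma mobHat_upset
    (hup : ∀ ⦃S T : Finset (Fin n)⦄, P S → S ⊆ T → T ≠ Finset.univ → P T)
    (hnu : ∀ S, P S → S ≠ Finset.univ) :
    mobHat {S // P S} = -1 - ∑ B : Finset (Fin n),
      (if P B then ((-1:ℤ)^(n - B.card)) else 0) := by
  classical
  have hne : (⊥ : Bd {S // P S}) ≠ ⊤ := by
    intro h
    exact WithBot.bot_ne_coe h
  have h0 := mob_sum_left_ne (⊥ : Bd {S // P S}) ⊤ hne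
  rw [Finset.sum_filter] at h0
  rw [sum_Bd] at h0
  simp only [bot_le, le_top, and_self, if_true] at h0
  rw [mob_self] at h0
  rw [Finset.sum_congr rfl (fun T _ => mob_coe_top hup hnu T)] at h0
  have hs2 : ∑ T : {S // P S}, ((-1:ℤ)^(n - T.1.card))
      = ∑ B : Finset (Fin n), (if P B then ((-1:ℤ)^(n - B.card)) else 0) := by
    rw [← Finset.sum_filter]
    exact (Finset.sum_subtype (Finset.univ.filter P) (fun x => by simp)
      (fun B => ((-1:ℤ)^(n - B.card)))).symm
  rw [hs2] at h0
  unfold mobHat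
  linarith [h0]

end Upset

/-- The subsequence of the word `w` indexed by the set of positions `S`,
taken in increasing position order. -/
def subIdx {A : Type*} (w : List A) (S : Finset (Fin w.length)) : List A :=
  (S.sort (· ≤ ·)).map (w.get ·)

lemma subIdx_mono {A : Type*} (w : List A) {S T : Finset (Fin w.length)} (h : S ⊆ T) :
    (subIdx w S).Sublist (subIdx w T) := by
  apply List.Sublist.map
  apply List.sublist_of_subperm_of_pairwise ?_ (Finset.pairwise_sort _ _) (Finset.pairwise_sort _ _)
  apply List.subperm_of_subset (Finset.sort_nodup _ _)
  intro x hx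
  rw [Finset.mem_sort] at hx ⊢
  exact h hx

lemma subIdx_univ {A : Type*} (w : List A) : subIdx w Finset.univ = w := by
  rw [subIdx, Fin.sort_univ, ← List.ofFn_eq_map, List.ofFn_get]

lemma subIdx_length {A : Type*} (w : List A) (S : Finset (Fin w.length)) :
    (subIdx w S).length = S.card := by
  simp [subIdx, Finset.length_sort]

lemma subIdx_sublist {A : Type*} (w : List A) (S : Finset (Fin w.length)) :
    (subIdx w S).Sublist w := by
  have := subIdx_mono w (Finset.subset_univ S)
  rwa [subIdx_univ] at this

/-- `E u w`: the number of embeddings of `u` in `w`, i.e. of sets of positions of `w`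
whose indexed subsequence is `u`. -/
noncomputable def wordE {A : Type*} (u w : List A) : ℕ :=
  (Finset.univ.filter fun S : Finset (Fin w.length) => subIdx w S = u).card

/-- The poset `A*(λ,w)`: all proper subsets `S ⊊ {1,…,|w|}` of positions such that `λ`
is a subsequence of the word `w|_S`, ordered by inclusion. -/
abbrev AstarW {A : Type*} (w lam : List A) :=
  {S : Finset (Fin w.length) // S ≠ Finset.univ ∧ lam.Sublist (subIdx w S)}

/-- The poset `A(λ,w)`: all proper subsets `S ⊊ {1,…,|w|}` of positions such that `λ`
is a subsequence of the word `w|_S` and `|S| > |λ|`, ordered by inclusion. -/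
abbrev AW {A : Type*} (w lam : List A) :=
  {S : Finset (Fin w.length) // S ≠ Finset.univ ∧ lam.length < S.card ∧
    lam.Sublist (subIdx w S)}

/-- For words `u < w` in subword order,
`μ(u,w) = μ(0̂,1̂ in Â(u,w)) + ∑_{u < λ < w} μ(u,λ) · μ(0̂,1̂ in Â*(λ,w))`.
The Möbius function `mu` of subword order is characterised by its defining
recurrence. -/
theorem stmt16 {A : Type*} (mu : List A → List A → ℤ)
    (hmu_self : ∀ u : List A, mu u u = 1)
    (hmu_rec : ∀ u w : List A, u.Sublist w → u ≠ w →
      ∑ c ∈ w.sublists.toFinset.filter (fun c => u.Sublist c), mu u c = 0)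
    (u w : List A) (huw : u.Sublist w) (hne : u ≠ w) :
    mu u w = mobHat (AW w u) +
      ∑ lam ∈ w.sublists.toFinset.filter
          (fun lam => u.Sublist lam ∧ lam ≠ u ∧ lam ≠ w),
        mu u lam * mobHat (AstarW w lam) := by
  classical
  set Lam := w.sublists.toFinset.filter (fun lam => u.Sublist lam ∧ lam ≠ u ∧ lam ≠ w)
    with hLam
  have hAstar : ∀ lam : List A, mobHat (AstarW w lam)
      = -1 - ∑ B : Finset (Fin w.length),
        (if B ≠ Finset.univ ∧ lam.Sublist (subIdx w B)
         then ((-1:ℤ)^(w.length - B.card)) else 0) :=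
    fun lam => mobHat_upset (P := fun S => S ≠ Finset.univ ∧ lam.Sublist (subIdx w S))
      (fun S T hS hST hT => ⟨hT, hS.2.trans (subIdx_mono w hST)⟩) (fun S hS => hS.1)
  have hAW : mobHat (AW w u)
      = -1 - ∑ B : Finset (Fin w.length),
        (if B ≠ Finset.univ ∧ u.length < B.card ∧ u.Sublist (subIdx w B)
         then ((-1:ℤ)^(w.length - B.card)) else 0) :=
    mobHat_upset
      (P := fun S => S ≠ Finset.univ ∧ u.length < S.card ∧ u.Sublist (subIdx w S))
      (fun S T hS hST hT => ⟨hT, lt_of_lt_of_le hS.2.1 (Finset.card_le_card hST),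
        hS.2.2.trans (subIdx_mono w hST)⟩) (fun S hS => hS.1)
  -- the defining recurrence at (u, w)
  have hM : ∑ lam ∈ Lam, mu u lam = -1 - mu u w := by
    have hrec := hmu_rec u w huw hne
    have hsetW : w.sublists.toFinset.filter (fun c => u.Sublist c)
        = insert u (insert w Lam) := by
      ext c
      simp only [hLam, Finset.mem_insert, Finset.mem_filter, List.mem_toFinset,
        List.mem_sublists]
      constructor
      · rintro ⟨h1, h2⟩
        by_cases hc1 : c = u
        · exact Or.inl hc1
        by_cases hc2 : c = w
        · exact Or.inr (Or.inl hc2)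
        · exact Or.inr (Or.inr ⟨h1, h2, hc1, hc2⟩)
      · rintro (rfl | rfl | ⟨h1, h2, _, _⟩)
        · exact ⟨huw, List.Sublist.refl _⟩
        · exact ⟨List.Sublist.refl _, huw⟩
        · exact ⟨h1, h2⟩
    rw [hsetW] at hrec
    have hu_notmem : u ∉ insert w Lam := by
      simp only [hLam, Finset.mem_insert, Finset.mem_filter]
      rintro (h | ⟨_, _, h, _⟩)
      · exact hne h
      · exact h rfl
    have hw_notmem : w ∉ Lam := by
      simp only [hLam, Finset.mem_filter]
      rintro ⟨_, _, _, h⟩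
      exact h rfl
    rw [Finset.sum_insert hu_notmem, Finset.sum_insert hw_notmem, hmu_self] at hrec
    linarith [hrec]
  -- key pointwise identity for the sum swap
  have hkey : ∀ B : Finset (Fin w.length),
      (∑ lam ∈ Lam, mu u lam * (if B ≠ Finset.univ ∧ lam.Sublist (subIdx w B)
          then ((-1:ℤ)^(w.length - B.card)) else 0))
      = -(if B ≠ Finset.univ ∧ u.length < B.card ∧ u.Sublist (subIdx w B)
          then ((-1:ℤ)^(w.length - B.card)) else 0) := by
    intro B
    by_cases hB : B = Finset.univ
    · rw [if_neg (fun h => h.1 hB), Finset.sum_eq_zero, neg_zero]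
      intro lam _
      rw [if_neg (fun h => h.1 hB), mul_zero]
    · have hvw : (subIdx w B).Sublist w := subIdx_sublist w B
      have hvlen : (subIdx w B).length = B.card := subIdx_length w B
      have hBn : B.card < w.length := by
        have h1 : B ⊂ Finset.univ := Finset.ssubset_univ_iff.mpr hB
        simpa using Finset.card_lt_card h1
      have htrim : ∀ lam ∈ Lam,
          mu u lam * (if B ≠ Finset.univ ∧ lam.Sublist (subIdx w B)
            then ((-1:ℤ)^(w.length - B.card)) else 0)
          = if lam.Sublist (subIdx w B)
            then mu u lam * ((-1:ℤ)^(w.length - B.card)) else 0 := by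
        intro lam _
        by_cases h : lam.Sublist (subIdx w B)
        · rw [if_pos ⟨hB, h⟩, if_pos h]
        · rw [if_neg (fun hh => h hh.2), if_neg h, mul_zero]
      rw [Finset.sum_congr rfl htrim, ← Finset.sum_filter, ← Finset.sum_mul]
      by_cases huv : u.Sublist (subIdx w B) ∧ subIdx w B ≠ u
      · have hfil : (Lam.filter (fun lam => lam.Sublist (subIdx w B)))
            = ((subIdx w B).sublists.toFinset.filter (fun c => u.Sublist c)).erase u := by
          ext c
          simp only [hLam, Finset.mem_erase, Finset.mem_filter, List.mem_toFinset,
            List.mem_sublists]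
          constructor
          · rintro ⟨⟨hcW, hc1, hc2, hc3⟩, hcv⟩
            exact ⟨hc2, hcv, hc1⟩
          · rintro ⟨hcu, hcv, huc⟩
            refine ⟨⟨hcv.trans hvw, huc, hcu, ?_⟩, hcv⟩
            rintro rfl
            have := List.Sublist.length_le hcv
            omega
        rw [hfil]
        have hrec2 := hmu_rec u (subIdx w B) huv.1 (fun h => huv.2 h.symm)
        have hu_mem : u ∈ (subIdx w B).sublists.toFinset.filter (fun c => u.Sublist c) := by
          simp only [Finset.mem_filter, List.mem_toFinset, List.mem_sublists]
          exact ⟨huv.1, List.Sublist.refl u⟩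
        have hesum := Finset.add_sum_erase _ (fun c => mu u c) hu_mem
        have hlt : u.length < B.card := by
          have h1 := List.Sublist.length_le huv.1
          have h2 : u.length ≠ (subIdx w B).length := by
            intro h
            exact huv.2 (List.Sublist.eq_of_length huv.1 h).symm
          omega
        rw [if_pos ⟨hB, hlt, huv.1⟩]
        have herase : ∑ c ∈ ((subIdx w B).sublists.toFinset.filter
            (fun c => u.Sublist c)).erase u, mu u c = -1 := by
          beta_reduce at hesum
          rw [hmu_self] at hesum
          linarith [hesum, hrec2]
        rw [herase]
        ring
      · have hfil0 : (Lam.filter (fun lam => lam.Sublist (subIdx w B))) = ∅ := by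
          rw [Finset.eq_empty_iff_forall_notMem]
          intro c hc
          simp only [hLam, Finset.mem_filter, List.mem_toFinset, List.mem_sublists] at hc
          obtain ⟨⟨hcW, hc1, hc2, hc3⟩, hcv⟩ := hc
          apply huv
          refine ⟨hc1.trans hcv, fun hvu => hc2 (List.Sublist.antisymm (hvu ▸ hcv) hc1)⟩
        rw [hfil0, Finset.sum_empty, zero_mul, if_neg, neg_zero]
        intro hh
        apply huv
        refine ⟨hh.2.2, fun hvu => ?_⟩
        have : (subIdx w B).length = u.length := by rw [hvu]
        omega
  -- assemble
  have hsum2 : ∑ lam ∈ Lam, mu u lam * mobHat (AstarW w lam)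
      = ∑ lam ∈ Lam, (-(mu u lam) - mu u lam
          * (∑ B : Finset (Fin w.length),
              (if B ≠ Finset.univ ∧ lam.Sublist (subIdx w B)
               then ((-1:ℤ)^(w.length - B.card)) else 0))) :=
    Finset.sum_congr rfl fun lam _ => by rw [hAstar lam]; ring
  have e1 : ∑ lam ∈ Lam, (-(mu u lam) - mu u lam
          * (∑ B : Finset (Fin w.length),
              (if B ≠ Finset.univ ∧ lam.Sublist (subIdx w B)
               then ((-1:ℤ)^(w.length - B.card)) else 0)))
      = (-(∑ lam ∈ Lam, mu u lam)) - (∑ lam ∈ Lam, mu u lam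
          * (∑ B : Finset (Fin w.length),
              (if B ≠ Finset.univ ∧ lam.Sublist (subIdx w B)
               then ((-1:ℤ)^(w.length - B.card)) else 0))) := by
    rw [Finset.sum_sub_distrib, Finset.sum_neg_distrib]
  have hBswap : ∑ lam ∈ Lam, mu u lam
          * (∑ B : Finset (Fin w.length),
              (if B ≠ Finset.univ ∧ lam.Sublist (subIdx w B)
               then ((-1:ℤ)^(w.length - B.card)) else 0))
      = -(∑ B : Finset (Fin w.length),
          (if B ≠ Finset.univ ∧ u.length < B.card ∧ u.Sublist (subIdx w B)
           then ((-1:ℤ)^(w.length - B.card)) else 0)) := by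
    have h1 : ∀ lam ∈ Lam, mu u lam
        * (∑ B : Finset (Fin w.length),
            (if B ≠ Finset.univ ∧ lam.Sublist (subIdx w B)
             then ((-1:ℤ)^(w.length - B.card)) else 0))
        = ∑ B : Finset (Fin w.length), mu u lam
            * (if B ≠ Finset.univ ∧ lam.Sublist (subIdx w B)
               then ((-1:ℤ)^(w.length - B.card)) else 0) :=
      fun lam _ => Finset.mul_sum _ _ _
    rw [Finset.sum_congr rfl h1, Finset.sum_comm, ← Finset.sum_neg_distrib]
    exact Finset.sum_congr rfl fun B _ => hkey B
  rw [hAW, hsum2, e1, hBswap, hM]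
  ring
end
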